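/- arXiv:1601.02311 — 7 statements merged into one kernel-verified Lean document; each statement's English description precedes it below -/
import Mathlib

section
/- Let f : {0,1}^n → ℝ, let δ > 0, and let d be a nonnegative integer. Then there is NO family of real polynomials h_1,…,h_r in n variables, each of degree at most d, with Σ_{x ∈ {0,1}^n} |f(x) − Σ_j h_j(x)²| ≤ δ·2^n, if and only if there exists a witness function ψ : {0,1}^n → ℝ satisfying: (i) Σ_{x ∈ {0,1}^n} f(x)·ψ(x) > δ·2^n; (ii) Σ_{x ∈ {0,1}^n} p(x)²·ψ(x) ≤ 0 for every real polynomial p in n variables of degree at most d; and (iii) max_{x ∈ {0,1}^n} |ψ(x)| = 1. -/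
open MvPolynomial

/-- The boolean point of the hypercube corresponding to `x : Fin n → Bool`. -/
def bv {n : ℕ} (x : Fin n → Bool) (i : Fin n) : ℝ := if x i then 1 else 0

open Finset

namespace L1Sos

/-- The space of real-valued functions on the hypercube. -/
abbrev E (n : ℕ) := (Fin n → Bool) → ℝ

/-- Evaluation of a polynomial on the hypercube, as a linear map. -/
noncomputable def evalL (n : ℕ) : MvPolynomial (Fin n) ℝ →ₗ[ℝ] E n :=
  LinearMap.pi fun x => (MvPolynomial.aeval (bv x)).toLinearMap

lemma evalL_apply (n : ℕ) (p : MvPolynomial (Fin n) ℝ) (x : Fin n → Bool) :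
    evalL n p x = eval (bv x) p := by
  show aeval (bv x) p = _
  rw [MvPolynomial.aeval_def, Algebra.algebraMap_self, MvPolynomial.eval₂_id]

/-- `W n d` : functions on the cube realized by polynomials of total degree ≤ d. -/
noncomputable def W (n d : ℕ) : Submodule ℝ (E n) :=
  (MvPolynomial.restrictTotalDegree (Fin n) ℝ d).map (evalL n)

lemma mem_W_iff (n d : ℕ) (w : E n) :
    w ∈ W n d ↔ ∃ p : MvPolynomial (Fin n) ℝ, p.totalDegree ≤ d ∧ evalL n p = w := by
  simp only [W, Submodule.mem_map, MvPolynomial.mem_restrictTotalDegree]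

/-- The sos cone: sums of squares of functions in `W n d`. -/
def sos (n d : ℕ) : Set (E n) :=
  { g | ∃ (r : ℕ) (w : Fin r → E n), (∀ j, w j ∈ W n d) ∧ g = ∑ j, w j * w j }

lemma zero_mem_sos (n d : ℕ) : (0 : E n) ∈ sos n d :=
  ⟨0, fun j => 0, fun j => j.elim0, by simp⟩

lemma add_mem_sos {n d : ℕ} {g₁ g₂ : E n} (h₁ : g₁ ∈ sos n d) (h₂ : g₂ ∈ sos n d) :
    g₁ + g₂ ∈ sos n d := by
  obtain ⟨r₁, w₁, hw₁, rfl⟩ := h₁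
  obtain ⟨r₂, w₂, hw₂, rfl⟩ := h₂
  refine ⟨r₁ + r₂, Fin.append w₁ w₂, ?_, ?_⟩
  · intro j
    refine Fin.addCases (fun i => ?_) (fun i => ?_) j
    · rw [Fin.append_left]; exact hw₁ i
    · rw [Fin.append_right]; exact hw₂ i
  · rw [Fin.sum_univ_add]
    simp [Fin.append_left, Fin.append_right]

lemma smul_mem_sos {n d : ℕ} {c : ℝ} (hc : 0 ≤ c) {g : E n} (hg : g ∈ sos n d) :
    c • g ∈ sos n d := by
  obtain ⟨r, w, hw, rfl⟩ := hg
  refine ⟨r, fun j => Real.sqrt c • w j, fun j => Submodule.smul_mem _ _ (hw j), ?_⟩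
  rw [Finset.smul_sum]
  refine Finset.sum_congr rfl fun j _ => ?_
  rw [smul_mul_smul_comm, Real.mul_self_sqrt hc]

lemma convex_sos (n d : ℕ) : Convex ℝ (sos n d) := by
  intro g₁ h₁ g₂ h₂ a b ha hb _
  exact add_mem_sos (smul_mem_sos ha h₁) (smul_mem_sos hb h₂)

end L1Sos

namespace L1Sos
open Matrix

lemma sum_sq_expand {n r m : ℕ} (A : Matrix (Fin r) (Fin m) ℝ) (u : Fin m → E n) :
    ∑ j, (∑ i, A j i • u i) * (∑ i, A j i • u i)
      = ∑ i, ∑ k, (Aᵀ * A) i k • (u i * u k) := by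
  have h1 : ∀ j : Fin r, (∑ i, A j i • u i) * (∑ i, A j i • u i)
      = ∑ i, ∑ k, (A j i * A j k) • (u i * u k) := by
    intro j
    rw [Finset.sum_mul_sum]
    exact Finset.sum_congr rfl fun i _ => Finset.sum_congr rfl fun k _ => by
      rw [smul_mul_smul_comm]
  simp_rw [h1, Matrix.mul_apply, Matrix.transpose_apply, Finset.sum_smul]
  rw [Finset.sum_comm]
  exact Finset.sum_congr rfl fun i _ => Finset.sum_comm

/-- Every sos function is a sum of `finrank (W n d)` squares. -/
lemma sos_eq_range (n d : ℕ) :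
    sos n d = Set.range (fun w : Fin (Module.finrank ℝ (W n d)) → (W n d) =>
      ∑ j, ((w j : E n) * (w j : E n))) := by
  apply Set.Subset.antisymm
  · rintro g ⟨r, w, hw, rfl⟩
    set m := Module.finrank ℝ (W n d) with hm
    let b : Module.Basis (Fin m) ℝ (W n d) := Module.finBasis ℝ (W n d)
    let A : Matrix (Fin r) (Fin m) ℝ := fun j i => b.repr ⟨w j, hw j⟩ i
    have hrepr : ∀ j, w j = ∑ i, A j i • (b i : E n) := by
      intro j
      have := b.sum_repr ⟨w j, hw j⟩
      have := congrArg (Subtype.val) this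
      simp only [Submodule.coe_sum, Submodule.coe_smul] at this
      exact this.symm
    have hPSD : (Aᵀ * A).PosSemidef := by
      have := Matrix.posSemidef_conjTranspose_mul_self A
      rwa [Matrix.conjTranspose_eq_transpose_of_trivial] at this
    obtain ⟨B, hB⟩ : ∃ B : Matrix (Fin m) (Fin m) ℝ, Aᵀ * A = Bᴴ * B := by
      open scoped MatrixOrder in
      exact ⟨CFC.sqrt (Aᵀ * A), by rw [(CFC.sqrt_nonneg (Aᵀ * A)).posSemidef.1.eq, CFC.sqrt_mul_sqrt_self (Aᵀ * A) hPSD.nonneg]⟩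
    rw [Matrix.conjTranspose_eq_transpose_of_trivial] at hB
    refine ⟨fun j => ⟨∑ i, B j i • (b i : E n), Submodule.sum_mem _ fun i _ =>
      Submodule.smul_mem _ _ (b i).2⟩, ?_⟩
    show ∑ j, _ = _
    rw [sum_sq_expand, ← hB]
    have hr : ∑ j, w j * w j = ∑ i, ∑ k, (Aᵀ * A) i k • ((b i : E n) * (b k : E n)) := by
      rw [← sum_sq_expand]
      exact Finset.sum_congr rfl fun j _ => by rw [← hrepr j]
    rw [hr]
  · rintro g ⟨w, rfl⟩
    exact ⟨_, fun j => (w j : E n), fun j => (w j).2, rfl⟩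

lemma isClosed_sos (n d : ℕ) : IsClosed (sos n d) := by
  rw [sos_eq_range]
  set m := Module.finrank ℝ (W n d) with hm
  set Φ : (Fin m → (W n d)) → E n := fun w => ∑ j, ((w j : E n) * (w j : E n)) with hΦ
  have hcont : Continuous Φ := by
    apply continuous_finset_sum
    intro j _
    exact ((continuous_subtype_val.comp (continuous_apply j)).mul
      (continuous_subtype_val.comp (continuous_apply j)))
  apply IsSeqClosed.isClosed
  intro u g hu hg
  choose v hv using hu
  obtain ⟨C, hC⟩ : ∃ C : ℝ, ∀ k, ‖u k‖ ≤ C := by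
    obtain ⟨C, hC⟩ := (hg.norm.bddAbove_range)
    exact ⟨C, fun k => hC ⟨k, rfl⟩⟩
  have hbound : ∀ k j, ‖v k j‖ ≤ Real.sqrt C := by
    intro k j
    have hsq : ∀ x, ((v k j : E n) x) ^ 2 ≤ C := by
      intro x
      have h1 : ((v k j : E n) x) ^ 2 ≤ u k x := by
        rw [← hv k]
        simp only [Φ, Finset.sum_apply, Pi.mul_apply, ← sq]
        exact Finset.single_le_sum (f := fun j' => ((v k j' : E n) x) ^ 2)
          (fun j' _ => sq_nonneg _) (Finset.mem_univ j)
      calc ((v k j : E n) x) ^ 2 ≤ u k x := h1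
        _ ≤ |u k x| := le_abs_self _
        _ ≤ ‖u k‖ := by simpa using norm_le_pi_norm (u k) x
        _ ≤ C := hC k
    show ‖(v k j : E n)‖ ≤ Real.sqrt C
    rw [pi_norm_le_iff_of_nonneg (Real.sqrt_nonneg C)]
    intro x
    calc ‖(v k j : E n) x‖ = Real.sqrt (((v k j : E n) x) ^ 2) := by
          rw [Real.sqrt_sq_eq_abs]; rfl
      _ ≤ Real.sqrt C := Real.sqrt_le_sqrt (hsq x)
  have hvmem : ∀ k, v k ∈ Metric.closedBall (0 : Fin m → (W n d)) (Real.sqrt C) := by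
    intro k
    rw [Metric.mem_closedBall, dist_zero_right]
    rw [pi_norm_le_iff_of_nonneg (Real.sqrt_nonneg C)]
    intro j
    simpa using hbound k j
  obtain ⟨a, _, φ, hφ, hav⟩ := tendsto_subseq_of_bounded Metric.isBounded_closedBall hvmem
  refine ⟨a, ?_⟩
  have h1 : Filter.Tendsto (Φ ∘ v ∘ φ) Filter.atTop (nhds (Φ a)) :=
    (hcont.tendsto a).comp hav
  have h2 : Filter.Tendsto (Φ ∘ v ∘ φ) Filter.atTop (nhds g) := by
    have : (Φ ∘ v ∘ φ) = u ∘ φ := by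
      funext k; exact hv (φ k)
    rw [this]
    exact hg.comp hφ.tendsto_atTop
  exact tendsto_nhds_unique h1 h2

end L1Sos

namespace L1Sos
open Pointwise

lemma mem_sos_iff_poly (n d : ℕ) (g : E n) :
    g ∈ sos n d ↔ ∃ (r : ℕ) (h : Fin r → MvPolynomial (Fin n) ℝ),
      (∀ j, (h j).totalDegree ≤ d) ∧ g = fun x => ∑ j, (eval (bv x) (h j)) ^ 2 := by
  constructor
  · rintro ⟨r, w, hw, rfl⟩
    choose p hp hpe using fun j => (mem_W_iff n d (w j)).mp (hw j)
    refine ⟨r, p, hp, ?_⟩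
    funext x
    simp only [Finset.sum_apply, Pi.mul_apply]
    exact Finset.sum_congr rfl fun j _ => by rw [← hpe j, evalL_apply, sq]
  · rintro ⟨r, h, hdeg, rfl⟩
    refine ⟨r, fun j => evalL n (h j), fun j => (mem_W_iff n d _).mpr ⟨h j, hdeg j, rfl⟩, ?_⟩
    funext x
    simp only [Finset.sum_apply, Pi.mul_apply]
    exact Finset.sum_congr rfl fun j _ => by rw [evalL_apply, sq]

theorem hard_direction (n d : ℕ) (f : E n) (δ : ℝ) (hδ : 0 < δ)
    (hne : ¬ ∃ (r : ℕ) (h : Fin r → MvPolynomial (Fin n) ℝ),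
        (∀ j, (h j).totalDegree ≤ d) ∧
        ∑ x : Fin n → Bool, |f x - ∑ j, (eval (bv x) (h j)) ^ 2| ≤ δ * 2 ^ n) :
    ∃ ψ : (Fin n → Bool) → ℝ,
        (δ * 2 ^ n < ∑ x : Fin n → Bool, f x * ψ x) ∧
        (∀ p : MvPolynomial (Fin n) ℝ, p.totalDegree ≤ d →
          ∑ x : Fin n → Bool, (eval (bv x) p) ^ 2 * ψ x ≤ 0) ∧
        (∀ x, |ψ x| ≤ 1) ∧ (∃ x, |ψ x| = 1) := by
  have hε : (0:ℝ) < δ * 2 ^ n := by positivity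
  set B : Set (E n) := {e | ∑ x, |e x| ≤ δ * 2 ^ n} with hBdef
  have hBconv : Convex ℝ B := by
    intro e₁ h₁ e₂ h₂ a b ha hb hab
    have : ∑ x, |a • e₁ x + b • e₂ x| ≤ δ * 2 ^ n := by
      calc ∑ x, |a • e₁ x + b • e₂ x| ≤ ∑ x, (a * |e₁ x| + b * |e₂ x|) := by
            refine Finset.sum_le_sum fun x _ => ?_
            calc |a • e₁ x + b • e₂ x| ≤ |a • e₁ x| + |b • e₂ x| := abs_add_le _ _
              _ = a * |e₁ x| + b * |e₂ x| := by
                  simp [smul_eq_mul, abs_mul, abs_of_nonneg ha, abs_of_nonneg hb]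
        _ = a * ∑ x, |e₁ x| + b * ∑ x, |e₂ x| := by
            rw [Finset.sum_add_distrib, Finset.mul_sum, Finset.mul_sum]
        _ ≤ a * (δ * 2 ^ n) + b * (δ * 2 ^ n) := by
            gcongr <;> [exact h₁; exact h₂]
        _ = δ * 2 ^ n := by rw [← add_mul, hab, one_mul]
    simpa [hBdef] using this
  have hBclosed : IsClosed B := by
    have : Continuous fun e : E n => ∑ x, |e x| :=
      continuous_finset_sum _ fun x _ => (continuous_apply x).abs
    exact isClosed_le this continuous_const
  have hBcomp : IsCompact B := by
    refine Metric.isCompact_of_isClosed_isBounded hBclosed ?_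
    refine (Metric.isBounded_closedBall (x := (0 : E n)) (r := δ * 2 ^ n)).subset ?_
    intro e he
    rw [Metric.mem_closedBall, dist_zero_right,
      pi_norm_le_iff_of_nonneg hε.le]
    intro x
    calc ‖e x‖ = |e x| := rfl
      _ ≤ ∑ y, |e y| := Finset.single_le_sum (f := fun y => |e y|)
          (fun y _ => abs_nonneg _) (Finset.mem_univ x)
      _ ≤ δ * 2 ^ n := he
  have hDconv : Convex ℝ (B + sos n d) := hBconv.add (convex_sos n d)
  have hDclosed : IsClosed (B + sos n d) :=
    (isClosed_sos n d).add_left_of_isCompact hBcomp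
  have hfD : f ∉ B + sos n d := by
    intro hf
    obtain ⟨e, he, g, hg, hfe⟩ := Set.mem_add.mp hf
    obtain ⟨r, h, hdeg, rfl⟩ := (mem_sos_iff_poly n d g).mp hg
    refine hne ⟨r, h, hdeg, ?_⟩
    have : ∀ x, f x - ∑ j, (eval (bv x) (h j)) ^ 2 = e x := fun x => by
      have := congrFun hfe x
      simp only [Pi.add_apply] at this
      linarith [this]
    calc ∑ x, |f x - ∑ j, (eval (bv x) (h j)) ^ 2| = ∑ x, |e x| :=
          Finset.sum_congr rfl fun x _ => by rw [this x]
      _ ≤ δ * 2 ^ n := he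
  obtain ⟨F, u, hFD, hFf⟩ := geometric_hahn_banach_closed_point hDconv hDclosed hfD
  set ψ₀ : E n := fun x => F (fun y => if x = y then 1 else 0) with hψ₀
  have hFrep : ∀ g : E n, F g = ∑ x, g x * ψ₀ x := by
    intro g
    conv_lhs => rw [pi_eq_sum_univ g]
    rw [map_sum]
    exact Finset.sum_congr rfl fun x _ => by rw [map_smul]; rfl
  have h0B : (0 : E n) ∈ B := by simp [hBdef, hε.le]
  have memD : ∀ e ∈ B, ∀ g ∈ sos n d, e + g ∈ B + sos n d := fun e he g hg =>
    Set.mem_add.mpr ⟨e, he, g, hg, rfl⟩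
  have hu0 : 0 < u := by
    have := hFD 0 (by simpa using memD 0 h0B 0 (zero_mem_sos n d))
    simpa using this
  have hsosle : ∀ g ∈ sos n d, F g ≤ 0 := by
    intro g hg
    by_contra hpos
    push_neg at hpos
    have ht : 0 ≤ u / F g := le_of_lt (div_pos hu0 hpos)
    have := hFD ((u / F g) • g) (by
      simpa using memD 0 h0B _ (smul_mem_sos ht hg))
    rw [map_smul, smul_eq_mul, div_mul_cancel₀ _ (ne_of_gt hpos)] at this
    exact lt_irrefl u this
  obtain ⟨x₀, -, hx₀⟩ := Finset.exists_max_image Finset.univ (fun x => |ψ₀ x|)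
    ⟨Classical.arbitrary _, Finset.mem_univ _⟩
  set M := |ψ₀ x₀| with hM
  set s : ℝ := if ψ₀ x₀ < 0 then -1 else 1 with hs
  have hsψ : s * ψ₀ x₀ = M := by
    rw [hs, hM]
    rcases lt_or_ge (ψ₀ x₀) 0 with h | h
    · rw [if_pos h, abs_of_neg h]; ring
    · rw [if_neg (not_lt.mpr h), abs_of_nonneg h, one_mul]
  have habs_s : |s| = 1 := by
    rw [hs]
    rcases lt_or_ge (ψ₀ x₀) 0 with h | h
    · rw [if_pos h]; norm_num
    · rw [if_neg (not_lt.mpr h)]; norm_num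
  set e : E n := fun y => if x₀ = y then (δ * 2 ^ n) * s else 0 with he
  have heB : e ∈ B := by
    have : ∑ x, |e x| = δ * 2 ^ n := by
      rw [he]
      calc ∑ x, |if x₀ = x then (δ * 2 ^ n) * s else 0|
          = ∑ x, if x₀ = x then |(δ * 2 ^ n) * s| else 0 := by
            refine Finset.sum_congr rfl fun x _ => ?_
            split <;> simp
        _ = |(δ * 2 ^ n) * s| := by rw [Finset.sum_ite_eq]; simp
        _ = δ * 2 ^ n := by rw [abs_mul, habs_s, mul_one, abs_of_pos hε]
    exact le_of_eq this
  have hFe : F e = (δ * 2 ^ n) * M := by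
    rw [hFrep, he]
    calc ∑ x, (if x₀ = x then (δ * 2 ^ n) * s else 0) * ψ₀ x
        = ∑ x, if x₀ = x then (δ * 2 ^ n) * s * ψ₀ x else 0 := by
          refine Finset.sum_congr rfl fun x _ => ?_
          split <;> simp
      _ = (δ * 2 ^ n) * s * ψ₀ x₀ := by rw [Finset.sum_ite_eq]; simp
      _ = (δ * 2 ^ n) * M := by rw [mul_assoc, hsψ]
  have hkey : (δ * 2 ^ n) * M < u := by
    rw [← hFe]
    exact hFD e (by simpa using memD e heB 0 (zero_mem_sos n d))
  have hMpos : 0 < M := by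
    rcases (abs_nonneg (ψ₀ x₀)).lt_or_eq with h | h
    · exact h
    · exfalso
      have hall : ∀ x, ψ₀ x = 0 := fun x =>
        abs_eq_zero.mp (le_antisymm (le_trans (hx₀ x (Finset.mem_univ x)) h.symm.le) (abs_nonneg _))
      have : F f = 0 := by
        rw [hFrep]
        simp [hall]
      rw [this] at hFf
      exact absurd (hu0.trans hFf) (lt_irrefl 0)
  refine ⟨fun x => ψ₀ x / M, ?_, ?_, ?_, ⟨x₀, ?_⟩⟩
  · have hFfval : u < ∑ x, f x * ψ₀ x := by rw [← hFrep]; exact hFf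
    have hlt : (δ * 2 ^ n) * M < ∑ x, f x * ψ₀ x := hkey.trans hFfval
    calc δ * 2 ^ n < (∑ x, f x * ψ₀ x) / M := (lt_div_iff₀ hMpos).mpr hlt
      _ = ∑ x, f x * (ψ₀ x / M) := by
          rw [Finset.sum_div]; exact Finset.sum_congr rfl fun x _ => by ring
  · intro p hp
    have hmem : (evalL n p * evalL n p) ∈ sos n d :=
      ⟨1, fun _ => evalL n p, fun _ => (mem_W_iff n d _).mpr ⟨p, hp, rfl⟩, by
        rw [Fin.sum_univ_one]⟩
    have hle := hsosle _ hmem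
    rw [hFrep] at hle
    have : ∑ x, (eval (bv x) p) ^ 2 * ψ₀ x ≤ 0 := by
      calc ∑ x, (eval (bv x) p) ^ 2 * ψ₀ x
          = ∑ x, (evalL n p * evalL n p) x * ψ₀ x := by
            refine Finset.sum_congr rfl fun x _ => ?_
            rw [Pi.mul_apply, evalL_apply, sq]
        _ ≤ 0 := hle
    calc ∑ x, (eval (bv x) p) ^ 2 * (ψ₀ x / M)
        = (∑ x, (eval (bv x) p) ^ 2 * ψ₀ x) / M := by
          rw [Finset.sum_div]; exact Finset.sum_congr rfl fun x _ => by ring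
      _ ≤ 0 := div_nonpos_of_nonpos_of_nonneg this hMpos.le
  · intro x
    rw [abs_div, abs_of_pos hMpos, div_le_one hMpos]
    exact hx₀ x (Finset.mem_univ x)
  · rw [abs_div, abs_of_pos hMpos, ← hM, div_self (ne_of_gt hMpos)]

end L1Sos

/-- Strong SDP duality for `ℓ1`-approximate sos degree: `sos-deg_{δ2^n}(f, ℓ1) > d`
if and only if there is a witness function `ψ` with `Σ_x f(x)ψ(x) > δ·2^n`,
`Σ_x p(x)²ψ(x) ≤ 0` for all polynomials `p` of degree at most `d`, and
`max_x |ψ(x)| = 1`. -/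
theorem l1_sos_duality (n : ℕ) (f : (Fin n → Bool) → ℝ) (δ : ℝ) (hδ : 0 < δ)
    (d : ℕ) :
    (¬ ∃ (r : ℕ) (h : Fin r → MvPolynomial (Fin n) ℝ),
        (∀ j, (h j).totalDegree ≤ d) ∧
        ∑ x : Fin n → Bool, |f x - ∑ j, (eval (bv x) (h j)) ^ 2| ≤ δ * 2 ^ n)
    ↔ ∃ ψ : (Fin n → Bool) → ℝ,
        (δ * 2 ^ n < ∑ x : Fin n → Bool, f x * ψ x) ∧
        (∀ p : MvPolynomial (Fin n) ℝ, p.totalDegree ≤ d →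
          ∑ x : Fin n → Bool, (eval (bv x) p) ^ 2 * ψ x ≤ 0) ∧
        (∀ x, |ψ x| ≤ 1) ∧ (∃ x, |ψ x| = 1) := by

  constructor
  · exact L1Sos.hard_direction n d f δ hδ
  · rintro ⟨ψ, hgt, hpsd, habs, -⟩ ⟨r, h, hdeg, herr⟩
    set g : (Fin n → Bool) → ℝ := fun x => ∑ j, (eval (bv x) (h j)) ^ 2 with hg
    have hsplit : ∑ x : Fin n → Bool, f x * ψ x
        = ∑ x : Fin n → Bool, (f x - g x) * ψ x + ∑ x : Fin n → Bool, g x * ψ x := by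
      rw [← Finset.sum_add_distrib]
      exact Finset.sum_congr rfl fun x _ => by ring
    have h2 : ∑ x : Fin n → Bool, g x * ψ x ≤ 0 := by
      have : ∑ x : Fin n → Bool, g x * ψ x
          = ∑ j, ∑ x : Fin n → Bool, (eval (bv x) (h j)) ^ 2 * ψ x := by
        rw [Finset.sum_comm]
        exact Finset.sum_congr rfl fun x _ => by rw [hg, Finset.sum_mul]
      rw [this]
      exact Finset.sum_nonpos fun j _ => hpsd (h j) (hdeg j)
    have h1 : ∑ x : Fin n → Bool, (f x - g x) * ψ x ≤ δ * 2 ^ n := by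
      calc ∑ x : Fin n → Bool, (f x - g x) * ψ x
          ≤ ∑ x : Fin n → Bool, |f x - g x| := by
            refine Finset.sum_le_sum fun x _ => ?_
            calc (f x - g x) * ψ x ≤ |(f x - g x) * ψ x| := le_abs_self _
              _ = |f x - g x| * |ψ x| := abs_mul _ _
              _ ≤ |f x - g x| * 1 := by
                  exact mul_le_mul_of_nonneg_left (habs x) (abs_nonneg _)
              _ = |f x - g x| := mul_one _
        _ ≤ δ * 2 ^ n := herr
    linarith [hsplit, h1, h2, hgt]
end

section
/- Let n be a positive integer and let k be an integer with 0 ≤ k ≤ n/2. For every real r with k < r < k+1, the knapsack system Σ_{i=1}^n x_i − r = 0, x_1² − x_1 = 0, …, x_n² − x_n = 0 has a Positivstellensatz refutation of degree 2k+4: there exist real polynomials g, g_1, …, g_n in variables x_1,…,x_n and real polynomials h_1,…,h_m such that g(x)·(Σ_{i=1}^n x_i − r) + Σ_{i=1}^n g_i(x)·(x_i² − x_i) = 1 + Σ_{j=1}^m h_j(x)² as an identity in ℝ[x_1,…,x_n], where deg(g·(Σ_i x_i − r)) ≤ 2k+4, deg(g_i·(x_i² − x_i)) ≤ 2k+4 for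 each i, and deg(Σ_j h_j²) ≤ 2k+4. -/
open MvPolynomial Finset

namespace KnapsackAux


variable {n : ℕ}

/-- `f` is a combination `∑ gi i * (X i ^ 2 - X i)` with each term of total degree `≤ d`. -/
def IsComb (n : ℕ) (d : ℕ) (f : MvPolynomial (Fin n) ℝ) : Prop :=
  ∃ gi : Fin n → MvPolynomial (Fin n) ℝ,
    f = ∑ i, gi i * (X i ^ 2 - X i) ∧ ∀ i, (gi i * (X i ^ 2 - X i)).totalDegree ≤ d

lemma IsComb.zero (d : ℕ) : IsComb n d 0 := by
  refine ⟨fun _ => 0, by simp, fun i => by simp⟩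

lemma IsComb.add {d : ℕ} {f g : MvPolynomial (Fin n) ℝ} (hf : IsComb n d f)
    (hg : IsComb n d g) : IsComb n d (f + g) := by
  obtain ⟨gi, hgi, hdi⟩ := hf
  obtain ⟨gj, hgj, hdj⟩ := hg
  refine ⟨fun i => gi i + gj i, ?_, fun i => ?_⟩
  · rw [hgi, hgj, ← Finset.sum_add_distrib]
    simp [add_mul]
  · rw [add_mul]
    exact (totalDegree_add _ _).trans (max_le (hdi i) (hdj i))

lemma IsComb.mul_left {d : ℕ} {f : MvPolynomial (Fin n) ℝ}
    (p : MvPolynomial (Fin n) ℝ) (hf : IsComb n d f) :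
    IsComb n (p.totalDegree + d) (p * f) := by
  obtain ⟨gi, hgi, hdi⟩ := hf
  refine ⟨fun i => p * gi i, ?_, fun i => ?_⟩
  · rw [hgi, Finset.mul_sum]
    simp [mul_assoc]
  · rw [mul_assoc]
    exact (totalDegree_mul _ _).trans (add_le_add le_rfl (hdi i))

lemma IsComb.smul {d : ℕ} {f : MvPolynomial (Fin n) ℝ} (c : ℝ) (hf : IsComb n d f) :
    IsComb n d (c • f) := by
  obtain ⟨gi, hgi, hdi⟩ := hf
  refine ⟨fun i => c • gi i, ?_, fun i => ?_⟩
  · rw [hgi, Finset.smul_sum]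
    simp [smul_mul_assoc]
  · rw [smul_mul_assoc]
    exact (totalDegree_smul_le _ _).trans (hdi i)

lemma IsComb.neg {d : ℕ} {f : MvPolynomial (Fin n) ℝ} (hf : IsComb n d f) :
    IsComb n d (-f) := by
  simpa using hf.smul (-1)

lemma IsComb.sub {d : ℕ} {f g : MvPolynomial (Fin n) ℝ} (hf : IsComb n d f)
    (hg : IsComb n d g) : IsComb n d (f - g) := by
  simpa [sub_eq_add_neg] using hf.add hg.neg

lemma IsComb.mono {d d' : ℕ} {f : MvPolynomial (Fin n) ℝ} (hf : IsComb n d f)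
    (hdd : d ≤ d') : IsComb n d' f := by
  obtain ⟨gi, hgi, hdi⟩ := hf
  exact ⟨gi, hgi, fun i => (hdi i).trans hdd⟩

lemma IsComb.base {d : ℕ} (j : Fin n) (p : MvPolynomial (Fin n) ℝ)
    (hp : p.totalDegree ≤ d) : IsComb n (d + 2) (p * (X j ^ 2 - X j)) := by
  refine ⟨fun i => if i = j then p else 0, ?_, fun i => ?_⟩
  · rw [Finset.sum_eq_single j] <;> simp +contextual
  · by_cases h : i = j
    · subst h
      simp only [if_pos rfl]
      refine (totalDegree_mul _ _).trans (add_le_add hp ?_)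
      exact (totalDegree_sub _ _).trans (by simp [totalDegree_X_pow])
    · simp [h]

lemma IsComb.sum {ι : Type*} {d : ℕ} (s : Finset ι) (f : ι → MvPolynomial (Fin n) ℝ)
    (hf : ∀ i ∈ s, IsComb n d (f i)) : IsComb n d (∑ i ∈ s, f i) := by
  classical
  induction s using Finset.induction_on with
  | empty => simpa using IsComb.zero d
  | insert _ _ hx ih =>
    rw [Finset.sum_insert hx]
    exact (hf _ (Finset.mem_insert_self _ _)).add
      (ih fun i hi => hf i (Finset.mem_insert_of_mem hi))




variable {n : ℕ}

noncomputable def sP (n : ℕ) : MvPolynomial (Fin n) ℝ := ∑ i, X i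

noncomputable def Em (n m : ℕ) : MvPolynomial (Fin n) ℝ :=
  ∑ S ∈ powersetCard m (univ : Finset (Fin n)), ∏ i ∈ S, X i

noncomputable def Dm (n m : ℕ) : MvPolynomial (Fin n) ℝ :=
  ∑ S ∈ powersetCard m (univ : Finset (Fin n)), ∑ j ∈ S,
    (∏ i ∈ S.erase j, X i) * (X j ^ 2 - X j)

lemma partB (m : ℕ) :
    ∑ S ∈ powersetCard m (univ : Finset (Fin n)), ∑ j ∈ Sᶜ,
        ((∏ i ∈ insert j S, X i : MvPolynomial (Fin n) ℝ)) =
      (m + 1) • Em n (m + 1) := by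
  classical
  rw [Finset.sum_sigma' (powersetCard m (univ : Finset (Fin n))) (fun S => Sᶜ)
    (fun S j => ∏ i ∈ insert j S, (X i : MvPolynomial (Fin n) ℝ))]
  have : (m + 1) • Em n (m+1) =
      ∑ T ∈ powersetCard (m+1) (univ : Finset (Fin n)), ∑ j ∈ T,
        ∏ i ∈ T, (X i : MvPolynomial (Fin n) ℝ) := by
    rw [Em, Finset.smul_sum]
    refine Finset.sum_congr rfl fun T hT => ?_
    rw [Finset.sum_const, (mem_powersetCard_univ.1 hT)]
  rw [this, Finset.sum_sigma' (powersetCard (m+1) (univ : Finset (Fin n))) (fun T => T)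
    (fun T _ => ∏ i ∈ T, (X i : MvPolynomial (Fin n) ℝ))]
  refine Finset.sum_nbij' (fun p => ⟨insert p.2 p.1, p.2⟩) (fun q => ⟨q.1.erase q.2, q.2⟩)
    ?_ ?_ ?_ ?_ ?_
  · rintro ⟨S, j⟩ hp
    simp only [Finset.mem_sigma, mem_powersetCard_univ, Finset.mem_compl] at hp ⊢
    exact ⟨by rw [Finset.card_insert_of_notMem hp.2, hp.1], Finset.mem_insert_self _ _⟩
  · rintro ⟨T, j⟩ hq
    simp only [Finset.mem_sigma, mem_powersetCard_univ, Finset.mem_compl] at hq ⊢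
    exact ⟨by rw [Finset.card_erase_of_mem hq.2, hq.1]; rfl, Finset.notMem_erase _ _⟩
  · rintro ⟨S, j⟩ hp
    simp only [Finset.mem_sigma, mem_powersetCard_univ, Finset.mem_compl] at hp
    simp [Finset.erase_insert hp.2]
  · rintro ⟨T, j⟩ hq
    simp only [Finset.mem_sigma, mem_powersetCard_univ, Finset.mem_compl] at hq
    simp [Finset.insert_erase hq.2]
  · rintro ⟨S, j⟩ _
    rfl

lemma K1 (m : ℕ) : sP n * Em n m = (m + 1) • Em n (m + 1) + m • Em n m + Dm n m := by
  classical
  have expand : sP n * Em n m = ∑ S ∈ powersetCard m (univ : Finset (Fin n)),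
      ∑ j : Fin n, X j * ∏ i ∈ S, X i := by
    rw [sP, Em, Finset.sum_mul_sum]
    exact Finset.sum_comm
  rw [expand]
  have split : ∀ S ∈ powersetCard m (univ : Finset (Fin n)),
      (∑ j : Fin n, X j * ∏ i ∈ S, X i : MvPolynomial (Fin n) ℝ) =
        (∑ j ∈ S, ((∏ i ∈ S.erase j, X i) * (X j ^ 2 - X j) + ∏ i ∈ S, X i))
          + ∑ j ∈ Sᶜ, ∏ i ∈ insert j S, X i := by
    intro S _
    rw [← Finset.sum_add_sum_compl S (fun j => X j * ∏ i ∈ S, X i)]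
    congr 1
    · refine Finset.sum_congr rfl fun j hj => ?_
      have h1 : (∏ i ∈ S, X i : MvPolynomial (Fin n) ℝ) = X j * ∏ i ∈ S.erase j, X i :=
        (Finset.mul_prod_erase S _ hj).symm
      rw [h1]; ring
    · refine Finset.sum_congr rfl fun j hj => ?_
      rw [Finset.prod_insert (Finset.mem_compl.1 hj)]
  rw [Finset.sum_congr rfl split, Finset.sum_add_distrib, partB]
  have : ∑ S ∈ powersetCard m (univ : Finset (Fin n)),
      (∑ j ∈ S, ((∏ i ∈ S.erase j, X i) * (X j ^ 2 - X j) + ∏ i ∈ S, X i)) =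
      Dm n m + m • Em n m := by
    rw [Dm, Em, Finset.smul_sum, ← Finset.sum_add_distrib]
    refine Finset.sum_congr rfl fun S hS => ?_
    rw [Finset.sum_add_distrib, Finset.sum_const, (mem_powersetCard_univ.1 hS)]
  rw [this]
  ring


lemma deg_prod_X (S : Finset (Fin n)) :
    (∏ i ∈ S, (X i : MvPolynomial (Fin n) ℝ)).totalDegree ≤ S.card := by
  refine (totalDegree_finset_prod S _).trans ?_
  simp [totalDegree_X]

lemma Dm_isComb (m : ℕ) : IsComb n (m + 1) (Dm n m) := by
  refine IsComb.sum _ _ (fun S hS => IsComb.sum _ _ (fun j hj => ?_))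
  have hm : 1 ≤ m := by
    rw [← mem_powersetCard_univ.1 hS]; exact Finset.card_pos.2 ⟨j, hj⟩
  have hcard : (S.erase j).card = m - 1 := by
    rw [Finset.card_erase_of_mem hj, mem_powersetCard_univ.1 hS]
  have h1 : IsComb n ((m - 1) + 2) ((∏ i ∈ S.erase j, X i) * (X j ^ 2 - X j)) :=
    IsComb.base j _ ((deg_prod_X _).trans (le_of_eq hcard))
  exact h1.mono (by omega)

lemma prodsq (S : Finset (Fin n)) :
    ∃ I, IsComb n (2 * S.card) I ∧
      ∏ i ∈ S, (X i : MvPolynomial (Fin n) ℝ) ^ 2 = (∏ i ∈ S, X i) + I := by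
  classical
  induction S using Finset.induction_on with
  | empty => exact ⟨0, IsComb.zero _, by simp⟩
  | @insert j S hj ih =>
    obtain ⟨I, hIcomb, hIeq⟩ := ih
    refine ⟨(∏ i ∈ S, X i) * (X j ^ 2 - X j) + X j ^ 2 * I, ?_, ?_⟩
    · have h1 : IsComb n (S.card + 2) ((∏ i ∈ S, X i) * (X j ^ 2 - X j)) :=
        IsComb.base j _ (deg_prod_X S)
      have h2 : IsComb n ((X j ^ 2 : MvPolynomial (Fin n) ℝ).totalDegree + 2 * S.card)
          ((X j ^ 2 : MvPolynomial (Fin n) ℝ) * I) := IsComb.mul_left _ hIcomb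
      have hd : ((X j ^ 2 : MvPolynomial (Fin n) ℝ)).totalDegree ≤ 2 := by
        simp [totalDegree_X_pow]
      refine IsComb.add (h1.mono ?_) (h2.mono ?_)
      · rw [Finset.card_insert_of_notMem hj]; omega
      · rw [Finset.card_insert_of_notMem hj]; omega
    · rw [Finset.prod_insert hj, Finset.prod_insert hj, hIeq]
      ring

lemma PE (m : ℕ) : ∃ I, IsComb n m I ∧
    ∏ i ∈ Finset.range m, (sP n - C (i : ℝ)) =
      C ((m.factorial : ℝ)) * Em n m + I := by
  induction m with
  | zero =>
    refine ⟨0, IsComb.zero _, ?_⟩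
    simp [Em, Finset.powersetCard_zero]
  | succ m ih =>
    obtain ⟨I, hIcomb, hIeq⟩ := ih
    have hK : sP n * Em n m =
        C ((m : ℝ) + 1) * Em n (m + 1) + C ((m : ℝ)) * Em n m + Dm n m := by
      have := K1 (n := n) m
      rw [← Nat.cast_smul_eq_nsmul ℝ (m+1) (Em n (m+1)),
          ← Nat.cast_smul_eq_nsmul ℝ m (Em n m)] at this
      rw [this, smul_eq_C_mul, smul_eq_C_mul]
      push_cast
      ring
    refine ⟨C ((m.factorial : ℝ)) * Dm n m + I * (sP n - C (m : ℝ)), ?_, ?_⟩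
    · have h1 : IsComb n (m + 1) (C ((m.factorial : ℝ)) * Dm n m) := by
        have := (Dm_isComb (n := n) m).smul ((m.factorial : ℝ))
        rwa [smul_eq_C_mul] at this
      have h2 : IsComb n (1 + m) ((sP n - C (m : ℝ)) * I) := by
        have hdeg : (sP n - C (m : ℝ)).totalDegree ≤ 1 := by
          refine (totalDegree_sub _ _).trans (max_le ?_ ?_)
          · exact totalDegree_finsetSum_le fun i _ => by simp [totalDegree_X]
          · simp only [totalDegree_C]; omega
        have h3 := IsComb.mul_left (sP n - C (m : ℝ)) hIcomb
        exact h3.mono (by omega)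
      rw [mul_comm I]
      exact IsComb.add h1 (h2.mono (by omega))
    · rw [Finset.prod_range_succ, hIeq]
      have hfact : ((m + 1).factorial : ℝ) = (m.factorial : ℝ) * ((m : ℝ) + 1) := by
        rw [Nat.factorial_succ]; push_cast; ring
      rw [hfact, map_mul]
      push_cast
      linear_combination (C ((m.factorial : ℝ)) : MvPolynomial (Fin n) ℝ) * hK


end KnapsackAux

open KnapsackAux

open MvPolynomial

/-- For `0 ≤ k ≤ n/2` and `k < r < k+1`, the knapsack system has a
Positivstellensatz refutation of degree `2k+4`. -/
theorem knapsack_refutation_upper_bound (n k : ℕ) (hn : 0 < n) (hk : 2 * k ≤ n)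
    (r : ℝ) (hr1 : (k : ℝ) < r) (hr2 : r < (k : ℝ) + 1) :
    ∃ (g : MvPolynomial (Fin n) ℝ) (gi : Fin n → MvPolynomial (Fin n) ℝ)
      (m : ℕ) (h : Fin m → MvPolynomial (Fin n) ℝ),
      g * ((∑ i, X i) - C r) + (∑ i, gi i * (X i ^ 2 - X i))
        = 1 + ∑ j, (h j) ^ 2 ∧
      (g * ((∑ i, X i) - C r)).totalDegree ≤ 2 * k + 4 ∧
      (∀ i, (gi i * (X i ^ 2 - X i)).totalDegree ≤ 2 * k + 4) ∧
      (∑ j, (h j) ^ 2).totalDegree ≤ 2 * k + 4 := by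
  classical
  -- univariate data
  set ρ : ℝ := ∏ i ∈ Finset.range (k + 2), (r - (i : ℝ)) with hρ
  have hρneg : ρ < 0 := by
    rw [hρ, Finset.prod_range_succ]
    have h1 : (0 : ℝ) < ∏ i ∈ Finset.range (k + 1), (r - (i : ℝ)) := by
      refine Finset.prod_pos fun i hi => ?_
      have : (i : ℝ) ≤ (k : ℝ) := by
        exact_mod_cast Nat.lt_succ_iff.1 (Finset.mem_range.1 hi)
      linarith
    have h2 : r - ((k + 1 : ℕ) : ℝ) < 0 := by push_cast; linarith
    exact mul_neg_of_pos_of_neg h1 h2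
  set a : ℝ := -ρ⁻¹ with ha
  have hapos : 0 < a := by
    rw [ha]
    have : ρ⁻¹ < 0 := inv_lt_zero.mpr hρneg
    linarith
  -- the univariate polynomial and its division by (X - C r)
  set p : Polynomial ℝ := ∏ i ∈ Finset.range (k + 2), (Polynomial.X - Polynomial.C (i : ℝ))
    with hp
  set q : Polynomial ℝ := 1 + Polynomial.C a * p with hq
  have hqr : q.IsRoot r := by
    rw [Polynomial.IsRoot, hq, Polynomial.eval_add, Polynomial.eval_one, Polynomial.eval_mul,
      Polynomial.eval_C, hp, Polynomial.eval_prod]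
    simp only [Polynomial.eval_sub, Polynomial.eval_X, Polynomial.eval_C]
    rw [← hρ, ha, neg_mul, inv_mul_cancel₀ (ne_of_lt hρneg)]
    ring
  obtain ⟨g₀, hg₀⟩ : Polynomial.X - Polynomial.C r ∣ q := Polynomial.dvd_iff_isRoot.2 hqr
  set g : MvPolynomial (Fin n) ℝ := Polynomial.aeval (sP n) g₀ with hg
  have key1 : g * (sP n - C r) = 1 + C a * ∏ i ∈ Finset.range (k + 2), (sP n - C (i : ℝ)) := by
    have h1 : Polynomial.aeval (sP n) q = g * (sP n - C r) := by
      rw [hg₀, map_mul, hg]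
      have : Polynomial.aeval (sP n) (Polynomial.X - Polynomial.C r) = sP n - C r := by
        simp [MvPolynomial.algebraMap_eq]
      rw [this]; ring
    have h2 : Polynomial.aeval (sP n) q
        = 1 + C a * ∏ i ∈ Finset.range (k + 2), (sP n - C (i : ℝ)) := by
      rw [hq, map_add, map_one, map_mul, hp, map_prod]
      simp [MvPolynomial.algebraMap_eq]
    rw [← h1, h2]
  -- elementary symmetric part
  obtain ⟨I₁, hI₁comb, hI₁⟩ := PE (n := n) (k + 2)
  -- SOS part
  set c : ℝ := a * ((k + 2).factorial : ℝ) with hc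
  have hcpos : 0 ≤ c := by positivity
  set c' : ℝ := Real.sqrt c with hc'
  have hc'sq : c' ^ 2 = c := Real.sq_sqrt hcpos
  choose IS hIScomb hISeq using prodsq (n := n)
  set I₂ : MvPolynomial (Fin n) ℝ :=
    c • ∑ S ∈ powersetCard (k + 2) (univ : Finset (Fin n)), IS S with hI₂
  have hI₂comb : IsComb n (2 * k + 4) I₂ := by
    refine IsComb.smul c (IsComb.sum _ _ fun S hS => ?_)
    refine (hIScomb S).mono ?_
    rw [mem_powersetCard_univ.1 hS]; omega
  have hSOS : ∑ S ∈ powersetCard (k + 2) (univ : Finset (Fin n)),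
      (c' • ∏ i ∈ S, (X i : MvPolynomial (Fin n) ℝ)) ^ 2 = C c * Em n (k + 2) + I₂ := by
    have step : ∀ S ∈ powersetCard (k + 2) (univ : Finset (Fin n)),
        (c' • ∏ i ∈ S, (X i : MvPolynomial (Fin n) ℝ)) ^ 2
          = c • ((∏ i ∈ S, X i) + IS S) := by
      intro S _
      rw [smul_pow, hc'sq, ← hISeq S, ← Finset.prod_pow]
    rw [Finset.sum_congr rfl step, ← Finset.smul_sum, Finset.sum_add_distrib, smul_add, hI₂,
      Em, smul_eq_C_mul]
  -- the correction term
  have hcorr : IsComb n (2 * k + 4) (I₂ - a • I₁) :=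
    hI₂comb.sub ((hI₁comb.smul a).mono (by omega))
  obtain ⟨gi, hgieq, hgideg⟩ := hcorr
  -- indexing the squares by Fin m
  set Sc : Finset (Finset (Fin n)) := powersetCard (k + 2) (univ : Finset (Fin n)) with hSc
  set m : ℕ := Fintype.card ↥Sc with hm
  set e : ↥Sc ≃ Fin m := Fintype.equivFin ↥Sc with he
  refine ⟨g, gi, m, fun j => c' • ∏ i ∈ ((e.symm j : ↥Sc) : Finset (Fin n)), X i, ?_, ?_, ?_, ?_⟩
  · -- main identity
    have hfin : ∑ j : Fin m, (c' • ∏ i ∈ ((e.symm j : ↥Sc) : Finset (Fin n)),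
        (X i : MvPolynomial (Fin n) ℝ)) ^ 2
        = ∑ S ∈ Sc, (c' • ∏ i ∈ S, (X i : MvPolynomial (Fin n) ℝ)) ^ 2 := by
      rw [← Finset.sum_coe_sort Sc (fun S => (c' • ∏ i ∈ S, (X i : MvPolynomial (Fin n) ℝ)) ^ 2)]
      exact Equiv.sum_comp e.symm
        (fun S : ↥Sc => (c' • ∏ i ∈ (S : Finset (Fin n)), (X i : MvPolynomial (Fin n) ℝ)) ^ 2)
    rw [hfin, hSc, hSOS, ← hgieq]
    have hsum : (∑ i, (X i : MvPolynomial (Fin n) ℝ)) = sP n := rfl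
    rw [hsum, key1, hI₁]
    have hCc : (C c : MvPolynomial (Fin n) ℝ) = C a * C ((k + 2).factorial : ℝ) := by
      rw [← map_mul, hc]
    rw [hCc, smul_eq_C_mul]
    ring
  · -- degree of g * (s - r)
    have hsum : (∑ i, (X i : MvPolynomial (Fin n) ℝ)) = sP n := rfl
    rw [hsum, key1]
    refine (totalDegree_add _ _).trans (max_le (by simp) ?_)
    refine (totalDegree_mul _ _).trans ?_
    have h1 : (C a : MvPolynomial (Fin n) ℝ).totalDegree = 0 := totalDegree_C a
    have h2 : (∏ i ∈ Finset.range (k + 2),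
        (sP n - C (i : ℝ))).totalDegree ≤ k + 2 := by
      refine (totalDegree_finset_prod _ _).trans ?_
      have hb : ∀ i ∈ Finset.range (k + 2), (sP n - C (i : ℝ)).totalDegree ≤ 1 := by
        intro i _
        refine (totalDegree_sub _ _).trans (max_le ?_ ?_)
        · exact totalDegree_finsetSum_le fun i _ => by simp [totalDegree_X]
        · simp only [totalDegree_C]; omega
      have := Finset.sum_le_card_nsmul (Finset.range (k + 2))
        (fun i => (sP n - C (i : ℝ)).totalDegree) 1 hb
      simpa using this
    omega
  · exact fun i => hgideg i
  · -- degree of the SOS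
    refine totalDegree_finsetSum_le fun j _ => ?_
    rw [smul_pow]
    refine (totalDegree_smul_le _ _).trans ?_
    refine (totalDegree_pow _ _).trans ?_
    have hcard : ((e.symm j : ↥Sc) : Finset (Fin n)).card = k + 2 :=
      mem_powersetCard_univ.1 (e.symm j).2
    have := deg_prod_X (n := n) ((e.symm j : ↥Sc) : Finset (Fin n))
    rw [hcard] at this
    omega
end

section
/- Let n and k be positive integers with k ≤ n, and let A_k ∈ ℝ[x_1,…,x_n] be the polynomial A_k(x) = |x|·(|x|−1)···(|x|−k+1), where |x| = x_1+⋯+x_n. Then there exist polynomials g_1,…,g_n ∈ ℝ[x_1,…,x_n], each of degree at most 2k−2, such that A_k(x) = Σ_{i=1}^n (x_i² − x_i)·g_i(x) + k!·e_k(x_1², x_2², …, x_n²) as an identity of polynomials, where e_k is the k-th elementary symmetric polynomial. In particular, A_k is a sum of squares modulo the ideal ⟨x_1²−x_1, …, x_n²−x_n⟩, since k!·e_k(x_1²,…,x_n²) = k!·Σ_{|S|=k} (Π_{i∈S} x_i)². -/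
open MvPolynomial Finset

private lemma degS (n : ℕ) (c : ℝ) :
    ((∑ i, X i : MvPolynomial (Fin n) ℝ) - C c).totalDegree ≤ 1 := by
  rw [sub_eq_add_neg, ← C_neg]
  refine (totalDegree_add _ _).trans (max_le ?_ (by simp))
  exact totalDegree_finsetSum_le fun i _ => by simp

private lemma degP (n : ℕ) (S : Finset (Fin n)) :
    (∏ j ∈ S, (X j : MvPolynomial (Fin n) ℝ) ^ 2).totalDegree ≤ 2 * S.card := by
  refine (totalDegree_finset_prod _ _).trans ?_
  simp [Finset.sum_const, mul_comm]

private lemma Dlemma (n k : ℕ) :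
    ∑ S ∈ powersetCard k (univ : Finset (Fin n)), ∑ i ∈ Sᶜ,
        ∏ j ∈ insert i S, (X j : MvPolynomial (Fin n) ℝ) ^ 2
      = ∑ T ∈ powersetCard (k + 1) (univ : Finset (Fin n)), ∑ i ∈ T,
        ∏ j ∈ T, (X j : MvPolynomial (Fin n) ℝ) ^ 2 := by
  rw [Finset.sum_sigma', Finset.sum_sigma']
  refine Finset.sum_nbij' (fun p => ⟨insert p.2 p.1, p.2⟩) (fun p => ⟨p.1.erase p.2, p.2⟩)
    ?_ ?_ ?_ ?_ ?_
  · rintro ⟨S, i⟩ hp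
    simp only [Finset.mem_sigma, Finset.mem_powersetCard_univ, Finset.mem_compl] at hp ⊢
    exact ⟨by rw [Finset.card_insert_of_notMem hp.2, hp.1], Finset.mem_insert_self _ _⟩
  · rintro ⟨T, i⟩ hp
    simp only [Finset.mem_sigma, Finset.mem_powersetCard_univ, Finset.mem_compl] at hp ⊢
    exact ⟨by rw [Finset.card_erase_of_mem hp.2, hp.1]; omega, by simp⟩
  · rintro ⟨S, i⟩ hp
    simp only [Finset.mem_sigma, Finset.mem_powersetCard_univ, Finset.mem_compl] at hp
    simp [Finset.erase_insert hp.2]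
  · rintro ⟨T, i⟩ hp
    simp only [Finset.mem_sigma, Finset.mem_powersetCard_univ] at hp
    simp [Finset.insert_erase hp.2]
  · rintro ⟨S, i⟩ _; rfl

private lemma key (n k : ℕ) :
    ∃ h : Fin n → MvPolynomial (Fin n) ℝ,
      (∀ i, (h i).totalDegree ≤ 2 * k) ∧
      (∑ S ∈ powersetCard k (univ : Finset (Fin n)), ∏ i ∈ S, X i ^ 2) *
          ((∑ i, X i) - C (k : ℝ))
        = (∑ i, (X i ^ 2 - X i) * h i)
          + C ((k : ℝ) + 1) *
              ∑ S ∈ powersetCard (k + 1) (univ : Finset (Fin n)), ∏ i ∈ S, X i ^ 2 := by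
  classical
  refine ⟨fun i => ∑ S ∈ powersetCard k (univ : Finset (Fin n)),
      if i ∈ S then X i * ∏ j ∈ S.erase i, X j ^ 2 else -∏ j ∈ S, X j ^ 2, ?_, ?_⟩
  · intro i
    refine totalDegree_finsetSum_le fun S hS => ?_
    rw [Finset.mem_powersetCard_univ] at hS
    split_ifs with hi
    · refine (totalDegree_mul _ _).trans ?_
      have := degP n (S.erase i)
      rw [Finset.card_erase_of_mem hi, hS] at this
      calc (X i : MvPolynomial (Fin n) ℝ).totalDegree
            + (∏ j ∈ S.erase i, (X j:MvPolynomial (Fin n) ℝ) ^ 2).totalDegree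
          ≤ 1 + 2 * (k - 1) := by
            exact add_le_add (by simp) this
        _ ≤ 2 * k := by
            have hk1 : 1 ≤ k := hS ▸ Finset.card_pos.mpr ⟨i, hi⟩
            omega
    · rw [totalDegree_neg]
      exact (degP n S).trans (by rw [hS])
  · -- the big identity
    have hswap : ∑ i, (X i ^ 2 - X i) *
        (∑ S ∈ powersetCard k (univ : Finset (Fin n)),
          if i ∈ S then X i * ∏ j ∈ S.erase i, X j ^ 2
          else -∏ j ∈ S, (X j : MvPolynomial (Fin n) ℝ) ^ 2)
        = ∑ S ∈ powersetCard k (univ : Finset (Fin n)), ∑ i,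
            (X i ^ 2 - X i) *
              (if i ∈ S then X i * ∏ j ∈ S.erase i, X j ^ 2
               else -∏ j ∈ S, (X j : MvPolynomial (Fin n) ℝ) ^ 2) := by
      rw [← Finset.sum_comm]
      exact Finset.sum_congr rfl fun i _ => Finset.mul_sum _ _ _
    rw [hswap]
    have hper : ∀ S ∈ powersetCard k (univ : Finset (Fin n)),
        ∑ i, (X i ^ 2 - X i) *
            (if i ∈ S then X i * ∏ j ∈ S.erase i, X j ^ 2 else -∏ j ∈ S, X j ^ 2)
          = (∑ i, X i) * (∏ j ∈ S, X j ^ 2) - C (k : ℝ) * (∏ j ∈ S, X j ^ 2)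
            - ∑ i ∈ Sᶜ, ∏ j ∈ insert i S, X j ^ 2 := by
      intro S hS
      rw [Finset.mem_powersetCard_univ] at hS
      rw [← Finset.sum_add_sum_compl S, ← Finset.sum_add_sum_compl S (fun i => (X i : MvPolynomial (Fin n) ℝ))]
      have h1 : ∀ i ∈ S, (X i ^ 2 - X i) *
          (if i ∈ S then X i * ∏ j ∈ S.erase i, X j ^ 2 else -∏ j ∈ S, (X j:MvPolynomial (Fin n) ℝ) ^ 2)
          = X i * ∏ j ∈ S, X j ^ 2 - ∏ j ∈ S, X j ^ 2 := by
        intro i hi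
        rw [if_pos hi, ← Finset.mul_prod_erase S (fun j => (X j:MvPolynomial (Fin n) ℝ) ^ 2) hi]
        ring
      have h2 : ∀ i ∈ Sᶜ, (X i ^ 2 - X i) *
          (if i ∈ S then X i * ∏ j ∈ S.erase i, X j ^ 2 else -∏ j ∈ S, (X j:MvPolynomial (Fin n) ℝ) ^ 2)
          = X i * ∏ j ∈ S, X j ^ 2 - ∏ j ∈ insert i S, X j ^ 2 := by
        intro i hi
        rw [Finset.mem_compl] at hi
        rw [if_neg hi, Finset.prod_insert hi]
        ring
      rw [Finset.sum_congr rfl h1, Finset.sum_congr rfl h2,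
        Finset.sum_sub_distrib, Finset.sum_sub_distrib, Finset.sum_const, hS,
        nsmul_eq_mul, ← map_natCast (C : ℝ →+* MvPolynomial (Fin n) ℝ) k, add_mul,
        ← Finset.sum_mul, ← Finset.sum_mul]
      ring
    rw [Finset.sum_congr rfl hper, Finset.sum_sub_distrib, Finset.sum_sub_distrib,
      Dlemma n k]
    have hT : ∑ T ∈ powersetCard (k + 1) (univ : Finset (Fin n)), ∑ i ∈ T,
        ∏ j ∈ T, (X j : MvPolynomial (Fin n) ℝ) ^ 2
        = C ((k : ℝ) + 1) *
            ∑ T ∈ powersetCard (k + 1) (univ : Finset (Fin n)), ∏ j ∈ T, X j ^ 2 := by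
      rw [Finset.mul_sum]
      refine Finset.sum_congr rfl fun T hT => ?_
      rw [Finset.mem_powersetCard_univ] at hT
      rw [Finset.sum_const, hT, nsmul_eq_mul,
        ← map_natCast (C : ℝ →+* MvPolynomial (Fin n) ℝ) (k + 1)]
      push_cast
      ring
    rw [hT, ← Finset.mul_sum, ← Finset.mul_sum]
    ring

/-- `A_k(x) = |x|(|x|-1)⋯(|x|-k+1)` equals `k!·e_k(x_1²,…,x_n²)` modulo the ideal
`⟨x_i² - x_i⟩`, with multipliers of degree at most `2k-2`. -/
theorem Ak_eq_sos_mod_ideal (n k : ℕ) (hk1 : 1 ≤ k) (hk2 : k ≤ n) :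
    ∃ g : Fin n → MvPolynomial (Fin n) ℝ,
      (∀ i, (g i).totalDegree ≤ 2 * k - 2) ∧
      (∏ j ∈ Finset.range k, ((∑ i, X i) - C (j : ℝ)))
        = (∑ i, (X i ^ 2 - X i) * g i)
          + C (k.factorial : ℝ) *
              ∑ S ∈ Finset.powersetCard k (Finset.univ : Finset (Fin n)),
                ∏ i ∈ S, (X i) ^ 2 := by
  clear hk2
  induction k, hk1 using Nat.le_induction with
  | base =>
    refine ⟨fun _ => -1, fun i => by simp, ?_⟩
    rw [Finset.prod_range_one, Finset.powersetCard_one]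
    rw [Finset.sum_map]
    simp only [Function.Embedding.coeFn_mk, Finset.prod_singleton, Nat.cast_zero, C_0,
      Nat.factorial_one, Nat.cast_one, C_1, one_mul, sub_zero]
    rw [← Finset.sum_add_distrib]
    exact Finset.sum_congr rfl fun i _ => by ring
  | succ k hk ih =>
    obtain ⟨g, hgdeg, hg⟩ := ih
    obtain ⟨h, hhdeg, hh⟩ := key n k
    refine ⟨fun i => g i * ((∑ j, X j) - C (k : ℝ)) + C (k.factorial : ℝ) * h i, ?_, ?_⟩
    · intro i
      refine (totalDegree_add _ _).trans (max_le ?_ ?_)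
      · refine (totalDegree_mul _ _).trans ?_
        have := add_le_add (hgdeg i) (degS n (k : ℝ))
        omega
      · refine (totalDegree_mul _ _).trans ?_
        have := hhdeg i
        simp only [totalDegree_C, zero_add]
        omega
    · have hC : (C (((k + 1).factorial : ℝ)) : MvPolynomial (Fin n) ℝ) = C ((k.factorial : ℝ)) * C ((k : ℝ) + 1) := by
        rw [← C_mul]
        congr 1
        push_cast [Nat.factorial_succ]
        ring
      have hsum : ∑ i, (X i ^ 2 - X i) *
          (g i * ((∑ j, X j) - C (k : ℝ)) + C (k.factorial : ℝ) * h i)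
          = (∑ i, (X i ^ 2 - X i) * g i) * ((∑ j, X j) - C (k : ℝ))
            + C (k.factorial : ℝ) * ∑ i, (X i ^ 2 - X i) * h i := by
        rw [Finset.sum_mul, Finset.mul_sum, ← Finset.sum_add_distrib]
        exact Finset.sum_congr rfl fun i _ => by ring
      rw [Finset.prod_range_succ, hg, hsum, hC]
      rw [add_mul, mul_assoc, hh]
      ring
end

section
/- Let n and k be positive integers with k ≤ n, and let A_k ∈ ℝ[x_1,…,x_n] be the polynomial A_k(x) = |x|·(|x|−1)···(|x|−k+1), where |x| = x_1+⋯+x_n. Then there exist polynomials g_1,…,g_n ∈ ℝ[x_1,…,x_n], each of degree at most k−1, such that A_k(x) = Σ_{i=1}^n (x_i² − x_i)·g_i(x) + k!·e_k(x_1, x_2, …, x_n) as an identity of polynomials, where e_k is the k-th elementary symmetric polynomial. -/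
open MvPolynomial Finset

namespace AkAux

noncomputable def E (n t : ℕ) : MvPolynomial (Fin n) ℝ :=
  ∑ S ∈ powersetCard t (univ : Finset (Fin n)), ∏ i ∈ S, X i

noncomputable def F (n : ℕ) (i : Fin n) (t : ℕ) : MvPolynomial (Fin n) ℝ :=
  ∑ s ∈ powersetCard t ((univ : Finset (Fin n)).erase i), ∏ j ∈ s, X j

lemma F_deg (n : ℕ) (i : Fin n) (t : ℕ) : (F n i t).totalDegree ≤ t := by
  refine (totalDegree_finset_sum _ _).trans (Finset.sup_le fun s hs => ?_)
  refine (totalDegree_finset_prod _ _).trans ?_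
  have := (mem_powersetCard.mp hs).2
  calc ∑ j ∈ s, (X j : MvPolynomial (Fin n) ℝ).totalDegree ≤ ∑ j ∈ s, 1 := by
        refine Finset.sum_le_sum fun j _ => ?_
        simp [totalDegree_X]
    _ = s.card := by simp
    _ ≤ t := le_of_eq this

lemma E_split (n : ℕ) (i : Fin n) (m : ℕ) :
    E n (m + 1) = F n i (m + 1) + X i * F n i m := by
  have h : (univ : Finset (Fin n)) = insert i (univ.erase i) :=
    (insert_erase (mem_univ i)).symm
  rw [E, h, powersetCard_succ_insert (notMem_erase i univ)]
  rw [Finset.sum_union]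
  · congr 1
    rw [Finset.sum_image, F, Finset.mul_sum]
    · refine Finset.sum_congr rfl fun s hs => ?_
      have hi : i ∉ s := fun h' => notMem_erase i univ ((mem_powersetCard.mp hs).1 h')
      rw [Finset.prod_insert hi]
    · intro s hs t ht hst
      have hi : i ∉ s := fun h' => notMem_erase i univ ((mem_powersetCard.mp hs).1 h')
      have hi' : i ∉ t := fun h' => notMem_erase i univ ((mem_powersetCard.mp ht).1 h')
      rw [← Finset.erase_insert hi, ← Finset.erase_insert hi', hst]
  · rw [Finset.disjoint_right]
    intro s hs hs'
    obtain ⟨u, hu, rfl⟩ := Finset.mem_image.mp hs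
    exact notMem_erase i univ ((mem_powersetCard.mp hs').1 (mem_insert_self i u))

lemma dc (n t : ℕ) :
    (∑ i : Fin n, X i * F n i t) = C ((t + 1 : ℕ) : ℝ) * E n (t + 1) := by
  have h1 : (∑ i : Fin n, X i * F n i t)
      = ∑ p ∈ (univ : Finset (Fin n)).sigma
          (fun i => powersetCard t ((univ : Finset (Fin n)).erase i)),
          ∏ j ∈ insert p.1 p.2, X j := by
    rw [Finset.sum_sigma]
    refine Finset.sum_congr rfl fun i _ => ?_
    rw [F, Finset.mul_sum]
    refine Finset.sum_congr rfl fun s hs => ?_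
    have hi : i ∉ s := fun h' => notMem_erase i univ ((mem_powersetCard.mp hs).1 h')
    rw [Finset.prod_insert hi]
  have h2 : (∑ p ∈ (powersetCard (t+1) (univ : Finset (Fin n))).sigma (fun T => T),
          ∏ j ∈ p.1, (X j : MvPolynomial (Fin n) ℝ))
      = C ((t + 1 : ℕ) : ℝ) * E n (t + 1) := by
    rw [Finset.sum_sigma, E, Finset.mul_sum]
    refine Finset.sum_congr rfl fun T hT => ?_
    have hc : T.card = t + 1 := (mem_powersetCard.mp hT).2
    have : ∑ _s ∈ T, ∏ j ∈ T, (X j : MvPolynomial (Fin n) ℝ)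
        = C ((t + 1 : ℕ) : ℝ) * ∏ i ∈ T, X i := by
      rw [Finset.sum_const, hc, nsmul_eq_mul]
      rw [← C_eq_coe_nat]
    exact this
  rw [h1, ← h2]
  refine Finset.sum_nbij' (fun p => ⟨insert p.1 p.2, p.1⟩) (fun q => ⟨q.2, q.1.erase q.2⟩)
    ?_ ?_ ?_ ?_ ?_
  · rintro ⟨i, s⟩ hp
    simp only [Finset.mem_sigma] at hp ⊢
    obtain ⟨-, hs⟩ := hp
    have hi : i ∉ s := fun h' => notMem_erase i univ ((mem_powersetCard.mp hs).1 h')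
    refine ⟨mem_powersetCard.mpr ⟨subset_univ _, ?_⟩, mem_insert_self i s⟩
    rw [Finset.card_insert_of_notMem hi, (mem_powersetCard.mp hs).2]
  · rintro ⟨T, i⟩ hq
    simp only [Finset.mem_sigma] at hq ⊢
    obtain ⟨hT, hi⟩ := hq
    refine ⟨mem_univ _, mem_powersetCard.mpr ⟨erase_subset_erase i (subset_univ T), ?_⟩⟩
    rw [Finset.card_erase_of_mem hi, (mem_powersetCard.mp hT).2]
    omega
  · rintro ⟨i, s⟩ hp
    simp only [Finset.mem_sigma] at hp
    have hi : i ∉ s := fun h' => notMem_erase i univ ((mem_powersetCard.mp hp.2).1 h')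
    simp [Finset.erase_insert hi]
  · rintro ⟨T, i⟩ hq
    simp only [Finset.mem_sigma] at hq
    simp [Finset.insert_erase hq.2]
  · rintro ⟨i, s⟩ _
    rfl

lemma key (n m : ℕ) :
    (∑ i : Fin n, X i) * E n (m + 1)
      = (∑ i : Fin n, (X i ^ 2 - X i) * F n i m)
        + C ((m + 1 : ℕ) : ℝ) * E n (m + 1) + C ((m + 1 + 1 : ℕ) : ℝ) * E n (m + 1 + 1) := by
  have h : (∑ i : Fin n, X i) * E n (m + 1)
      = ∑ i : Fin n, (X i * F n i (m + 1) + (X i ^ 2 - X i) * F n i m + X i * F n i m) := by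
    rw [Finset.sum_mul]
    refine Finset.sum_congr rfl fun i _ => ?_
    rw [E_split n i m]
    ring
  rw [h, Finset.sum_add_distrib, Finset.sum_add_distrib, dc, dc]
  abel

end AkAux

/-- `A_k(x) = |x|(|x|-1)⋯(|x|-k+1)` equals `k!·e_k(x_1,…,x_n)` modulo the ideal
`⟨x_i² - x_i⟩`, with multipliers of degree at most `k-1`. -/
theorem Ak_eq_esymm_mod_ideal (n k : ℕ) (hk1 : 1 ≤ k) (hk2 : k ≤ n) :
    ∃ g : Fin n → MvPolynomial (Fin n) ℝ,
      (∀ i, (g i).totalDegree ≤ k - 1) ∧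
      (∏ j ∈ Finset.range k, ((∑ i, X i) - C (j : ℝ)))
        = (∑ i, (X i ^ 2 - X i) * g i)
          + C (k.factorial : ℝ) *
              ∑ S ∈ Finset.powersetCard k (Finset.univ : Finset (Fin n)),
                ∏ i ∈ S, X i := by
  induction k with
  | zero => omega
  | succ k ih =>
    rcases Nat.eq_zero_or_pos k with rfl | hk
    · -- base case k+1 = 1
      refine ⟨fun _ => 0, fun i => by simp, ?_⟩
      have e1 : (∑ S ∈ powersetCard 1 (univ : Finset (Fin n)),
          ∏ i ∈ S, (X i : MvPolynomial (Fin n) ℝ)) = ∑ i, X i := esymm_one (Fin n) ℝ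
      simp [Finset.prod_range_one, e1, Nat.factorial]
    · obtain ⟨m, rfl⟩ : ∃ m, k = m + 1 := ⟨k - 1, by omega⟩
      obtain ⟨g, hdeg, heq⟩ := ih (by omega) (by omega)
      refine ⟨fun i => g i * ((∑ j, X j) - C (((m + 1 : ℕ)) : ℝ))
          + C (((m + 1).factorial : ℕ) : ℝ) * AkAux.F n i m, fun i => ?_, ?_⟩
      · -- degree bound
        have h1 : ((∑ j, X j : MvPolynomial (Fin n) ℝ)
            - C (((m + 1 : ℕ)) : ℝ)).totalDegree ≤ 1 := by
          rw [sub_eq_add_neg]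
          refine (totalDegree_add _ _).trans (max_le ?_ ?_)
          · refine (totalDegree_finset_sum _ _).trans (Finset.sup_le fun j _ => ?_)
            simp [totalDegree_X]
          · rw [totalDegree_neg, totalDegree_C]
            omega
        have h2 : (m + 1 + 1) - 1 = m + 1 := rfl
        rw [h2]
        refine (totalDegree_add _ _).trans (max_le ?_ ?_)
        · refine (totalDegree_mul _ _).trans ?_
          have := hdeg i
          omega
        · refine (totalDegree_mul _ _).trans ?_
          have := AkAux.F_deg n i m
          simp only [totalDegree_C]
          omega
      · -- main identity
        have hE : ∀ t, AkAux.E n t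
            = ∑ S ∈ powersetCard t (univ : Finset (Fin n)), ∏ i ∈ S, X i := fun t => rfl
        have hkey := AkAux.key n m
        have hs1 : (∑ i, (X i ^ 2 - X i) * (g i * ((∑ j, X j) - C (((m + 1 : ℕ)) : ℝ))
              + C (((m + 1).factorial : ℕ) : ℝ) * AkAux.F n i m))
            = (∑ i, (X i ^ 2 - X i) * g i) * ((∑ j, X j) - C (((m + 1 : ℕ)) : ℝ))
              + C (((m + 1).factorial : ℕ) : ℝ)
                * ∑ i, (X i ^ 2 - X i) * AkAux.F n i m := by
          rw [Finset.sum_mul, Finset.mul_sum, ← Finset.sum_add_distrib]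
          exact Finset.sum_congr rfl fun i _ => by ring
        have hfac : (C (((m + 1 + 1).factorial : ℕ) : ℝ) : MvPolynomial (Fin n) ℝ)
            = C (((m + 1).factorial : ℕ) : ℝ) * C (((m + 1 + 1 : ℕ)) : ℝ) := by
          rw [← C_mul, Nat.factorial_succ (m + 1)]
          push_cast
          ring_nf
        rw [Finset.prod_range_succ, heq, ← hE (m + 1), ← hE (m + 1 + 1), hfac, hs1]
        linear_combination C (((m + 1).factorial : ℕ) : ℝ) * hkey
end

section
/- Let n and t be integers with 1 ≤ t ≤ (n+1)/2, and let J(n,t) be the Johnson graph whose vertices are the t-element subsets of {1,…,n}, with S and T adjacent if and only if |S ∩ T| = t−1. Let A be the adjacency matrix of J(n,t) over ℝ. Then for every integer i with 0 ≤ i ≤ t, the number t(n−t) − i(n+1−i) is an eigenvalue of A whose eigenspace {v : A v = (t(n−t) − i(n+1−i))·v} has dimension exactly C(n,i) − C(n,i−1) (with the convention C(n,−1) = 0). Since these multiplicities sum to C(n,t), these are all the eigenvalues of A. -/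
open Finset Module Matrix

namespace JG

variable (n : ℕ)

abbrev K (j : ℕ) := {S : Finset (Fin n) // S.card = j}

def W (j : ℕ) : Matrix (K n (j+1)) (K n j) ℝ :=
  Matrix.of fun T S => if S.val ⊆ T.val then (1:ℝ) else 0

def Adj (m : ℕ) : Matrix (K n m) (K n m) ℝ :=
  Matrix.of fun S T => if (S.val ∩ T.val).card = m - 1 then (1:ℝ) else 0

lemma card_K (j : ℕ) : Fintype.card (K n j) = n.choose j := by
  simpa using Fintype.card_finset_len (α := Fin n) j

lemma card_filter_subsets (j : ℕ) (X : Finset (Fin n)) :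
    (Finset.univ.filter fun S : K n j => S.val ⊆ X).card = X.card.choose j := by
  rw [← Finset.card_powersetCard]
  apply Finset.card_bij (fun S _ => S.val)
  · intro S hS
    rw [Finset.mem_powersetCard]
    exact ⟨(Finset.mem_filter.mp hS).2, S.prop⟩
  · intro a _ b _ h; exact Subtype.ext h
  · intro P hP
    rw [Finset.mem_powersetCard] at hP
    exact ⟨⟨P, hP.2⟩, by simp [hP.1], rfl⟩

lemma card_filter_supersets (m : ℕ) (X : Finset (Fin n)) (hX : X.card ≤ m) :
    (Finset.univ.filter fun T : K n m => X ⊆ T.val).card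
      = (n - X.card).choose (m - X.card) := by
  have hc : Xᶜ.card = n - X.card := by simp [Finset.card_compl]
  rw [← hc, ← Finset.card_powersetCard]
  apply Finset.card_bij (fun T _ => T.val \ X)
  · intro T hT
    rw [Finset.mem_filter] at hT
    rw [Finset.mem_powersetCard]
    constructor
    · intro x hx
      rw [Finset.mem_sdiff] at hx
      simpa using hx.2
    · rw [Finset.card_sdiff_of_subset hT.2, T.prop]
  · intro a ha b hb h
    rw [Finset.mem_filter] at ha hb
    apply Subtype.ext
    rw [← Finset.sdiff_union_of_subset ha.2, ← Finset.sdiff_union_of_subset hb.2, h]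
  · intro P hP
    rw [Finset.mem_powersetCard] at hP
    have hd : Disjoint P X := by
      rw [Finset.disjoint_left]
      intro x hx hx'
      have := hP.1 hx
      simp at this
      exact this hx'
    have hcard : (P ∪ X).card = m := by
      rw [Finset.card_union_of_disjoint hd, hP.2]
      omega
    refine ⟨⟨P ∪ X, hcard⟩, ?_, ?_⟩
    · simp
    · rw [Finset.union_sdiff_distrib, Finset.sdiff_self, Finset.union_empty,
        Finset.sdiff_eq_self_of_disjoint hd]

lemma card_filter_supersets_zero (m : ℕ) (X : Finset (Fin n)) (hX : m < X.card) :
    (Finset.univ.filter fun T : K n m => X ⊆ T.val).card = 0 := by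
  rw [Finset.card_eq_zero, Finset.filter_eq_empty_iff]
  intro T _
  intro h
  have := Finset.card_le_card h
  rw [T.prop] at this
  omega
lemma WWt_apply (j : ℕ) (T T' : K n (j+1)) :
    (W n j * (W n j)ᵀ) T T' = (((T.val ∩ T'.val).card.choose j : ℕ) : ℝ) := by
  have : ∀ S : K n j,
      (W n j T S) * ((W n j)ᵀ S T') = if S.val ⊆ T.val ∩ T'.val then (1:ℝ) else 0 := by
    intro S
    simp only [W, Matrix.transpose_apply, Matrix.of_apply, Finset.subset_inter_iff]
    by_cases h1 : S.val ⊆ T.val <;> by_cases h2 : S.val ⊆ T'.val <;> simp [h1, h2]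
  rw [Matrix.mul_apply, Finset.sum_congr rfl fun S _ => this S, Finset.sum_boole,
    card_filter_subsets]

lemma WtW_apply (j : ℕ) (S S' : K n j) :
    ((W n j)ᵀ * W n j) S S'
      = ((Finset.univ.filter fun T : K n (j+1) => (S.val ∪ S'.val) ⊆ T.val).card : ℝ) := by
  have : ∀ T : K n (j+1),
      ((W n j)ᵀ S T) * (W n j T S') = if S.val ∪ S'.val ⊆ T.val then (1:ℝ) else 0 := by
    intro T
    simp only [W, Matrix.transpose_apply, Matrix.of_apply, Finset.union_subset_iff]
    by_cases h1 : S.val ⊆ T.val <;> by_cases h2 : S'.val ⊆ T.val <;> simp [h1, h2]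
  rw [Matrix.mul_apply, Finset.sum_congr rfl fun T _ => this T, Finset.sum_boole]

lemma le_n {j : ℕ} (S : K n j) : j ≤ n := by
  have := Finset.card_le_univ S.val
  simpa [S.prop] using this

lemma W_comm (j : ℕ) :
    (W n (j+1))ᵀ * W n (j+1) = W n j * (W n j)ᵀ + ((n:ℝ) - (2*(j+1):ℕ)) • 1 := by
  ext S S'
  have hn : j + 1 ≤ n := le_n n S
  have hv : (S.val ∩ S'.val).card + (S.val ∪ S'.val).card = (j+1) + (j+1) := by
    rw [Finset.card_inter_add_card_union, S.prop, S'.prop]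
  have hu : j + 1 ≤ (S.val ∪ S'.val).card := by
    have h1 := Finset.card_le_card (Finset.subset_union_left (s₁ := S.val) (s₂ := S'.val))
    rw [S.prop] at h1
    exact h1
  rw [WtW_apply, Matrix.add_apply, WWt_apply, Matrix.smul_apply, Matrix.one_apply]
  by_cases hSS : S = S'
  · have hU : (S.val ∪ S'.val).card = j + 1 := by rw [hSS, Finset.union_self, S'.prop]
    have hI : (S.val ∩ S'.val).card = j + 1 := by rw [hSS, Finset.inter_self, S'.prop]
    rw [card_filter_supersets n (j+2) _ (by rw [hU]; omega), hU, hI, if_pos hSS]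
    have h2 : j + 2 - (j+1) = 1 := by omega
    rw [h2, Nat.choose_one_right, Nat.choose_succ_self_right]
    push_cast [Nat.cast_sub hn]
    rw [smul_eq_mul]
    ring
  · have hne : S.val ≠ S'.val := fun h => hSS (Subtype.ext h)
    have hu2 : j + 2 ≤ (S.val ∪ S'.val).card := by
      rcases Nat.lt_or_ge (j+1) ((S.val ∪ S'.val).card) with h | h
      · omega
      · exfalso
        have he : S.val = S.val ∪ S'.val :=
          Finset.eq_of_subset_of_card_le Finset.subset_union_left (by rw [S.prop]; exact h)
        have hsub : S'.val ⊆ S.val := by rw [he]; exact Finset.subset_union_right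
        exact hne (Finset.eq_of_subset_of_card_le hsub (by rw [S.prop, S'.prop])).symm
    rw [if_neg hSS, smul_zero, add_zero]
    rcases Nat.lt_or_ge (j+2) ((S.val ∪ S'.val).card) with h | h
    · rw [card_filter_supersets_zero n (j+2) _ h]
      have hI : (S.val ∩ S'.val).card < j := by omega
      rw [Nat.choose_eq_zero_of_lt hI]
    · have hU : (S.val ∪ S'.val).card = j + 2 := by omega
      rw [card_filter_supersets n (j+2) _ (le_of_eq hU), hU]
      have hI : (S.val ∩ S'.val).card = j := by omega
      rw [hI, Nat.choose_self, Nat.sub_self, Nat.choose_zero_right]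

lemma W_zero : (W n 0)ᵀ * W n 0 = (n:ℝ) • 1 := by
  ext S S'
  have hS : S = S' := by
    apply Subtype.ext
    rw [Finset.card_eq_zero.mp S.prop, Finset.card_eq_zero.mp S'.prop]
  have hU : (S.val ∪ S'.val) = ∅ := by
    rw [Finset.card_eq_zero.mp S.prop, Finset.card_eq_zero.mp S'.prop, Finset.union_self]
  rw [WtW_apply, Matrix.smul_apply, Matrix.one_apply, if_pos hS]
  have : (Finset.univ.filter fun T : K n 1 => (S.val ∪ S'.val) ⊆ T.val).card
      = (n - 0).choose (1 - 0) := by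
    have := card_filter_supersets n 1 (S.val ∪ S'.val) (by rw [hU]; simp)
    rw [hU] at this ⊢
    simpa using this
  rw [this]
  simp

lemma W_adj (j : ℕ) : W n j * (W n j)ᵀ = Adj n (j+1) + (((j:ℝ)+1)) • 1 := by
  ext T T'
  rw [WWt_apply, Matrix.add_apply, Matrix.smul_apply, Matrix.one_apply]
  simp only [Adj, Matrix.of_apply, Nat.add_sub_cancel]
  by_cases hTT : T = T'
  · have hI : (T.val ∩ T'.val).card = j + 1 := by rw [hTT, Finset.inter_self, T'.prop]
    rw [hI, if_pos hTT, if_neg (by omega), Nat.choose_succ_self_right]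
    norm_num
  · have hne : T.val ≠ T'.val := fun h => hTT (Subtype.ext h)
    have hI : (T.val ∩ T'.val).card ≤ j := by
      rcases Nat.lt_or_ge ((T.val ∩ T'.val).card) (j+1) with h | h
      · omega
      · exfalso
        have h1 : T.val ∩ T'.val = T.val := by
          apply Finset.eq_of_subset_of_card_le Finset.inter_subset_left
          rw [T.prop]; exact h
        have h2 : T.val ∩ T'.val = T'.val := by
          apply Finset.eq_of_subset_of_card_le Finset.inter_subset_right
          rw [T'.prop]; exact h
        exact hne (h1 ▸ h2)
    rw [if_neg hTT, smul_zero, add_zero]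
    rcases Nat.lt_or_ge ((T.val ∩ T'.val).card) j with h | h
    · rw [Nat.choose_eq_zero_of_lt h, if_neg (by omega)]
      norm_num
    · have hI2 : (T.val ∩ T'.val).card = j := by omega
      rw [hI2, Nat.choose_self, if_pos rfl]
      norm_num
lemma dps_nonneg {ι : Type*} [Fintype ι] (v : ι → ℝ) : 0 ≤ v ⬝ᵥ v :=
  Finset.sum_nonneg fun i _ => mul_self_nonneg _

lemma W_inj (j : ℕ) (hj : 2*j < n) : Function.Injective (W n j).mulVecLin := by
  rw [← LinearMap.ker_eq_bot, LinearMap.ker_eq_bot']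
  intro f hf
  rw [Matrix.mulVecLin_apply] at hf
  have key : (0:ℝ) = f ⬝ᵥ (((W n j)ᵀ * W n j) *ᵥ f) := by
    rw [← Matrix.mulVec_mulVec, hf]
    simp [Matrix.mulVec_zero]
  have hff : f ⬝ᵥ f = 0 := by
    cases j with
    | zero =>
      rw [W_zero, Matrix.smul_mulVec, Matrix.one_mulVec, dotProduct_smul] at key
      have hn : (0:ℝ) < n := by exact_mod_cast Nat.pos_of_ne_zero (by omega)
      rw [smul_eq_mul] at key
      nlinarith [key]
    | succ k =>
      rw [W_comm, Matrix.add_mulVec, Matrix.smul_mulVec, Matrix.one_mulVec,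
        dotProduct_add, dotProduct_smul, smul_eq_mul] at key
      have h1 : f ⬝ᵥ ((W n k * (W n k)ᵀ) *ᵥ f) = ((W n k)ᵀ *ᵥ f) ⬝ᵥ ((W n k)ᵀ *ᵥ f) := by
        rw [← Matrix.mulVec_mulVec, Matrix.dotProduct_mulVec, ← Matrix.mulVec_transpose]
      rw [h1] at key
      have h2 := dps_nonneg ((W n k)ᵀ *ᵥ f)
      have h3 := dps_nonneg f
      have h4 : (0:ℝ) < (n:ℝ) - (2*(k+1):ℕ) := by
        have h5 : (2*(k+1) : ℕ) < n := hj
        have h6 := (Nat.cast_lt (α := ℝ)).mpr h5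
        linarith
      nlinarith
  exact dotProduct_self_eq_zero.mp hff

def Phi (i : ℕ) : (d : ℕ) → Matrix (K n (i+d)) (K n i) ℝ
  | 0 => (1 : Matrix (K n i) (K n i) ℝ)
  | d+1 => W n (i+d) * Phi i d

lemma Phi_zero (i : ℕ) : Phi n i 0 = (1 : Matrix (K n i) (K n i) ℝ) := rfl

lemma Phi_succ (i d : ℕ) : Phi n i (d+1) = W n (i+d) * Phi n i d := rfl

lemma Phi_inj (i d : ℕ) (h : 2*(i+d) ≤ n+1) : Function.Injective (Phi n i d).mulVecLin := by
  induction d with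
  | zero =>
    rw [Phi_zero, Matrix.mulVecLin_one]
    exact fun a b hab => hab
  | succ d ih =>
    rw [Phi_succ, Matrix.mulVecLin_mul]
    exact (W_inj n (i+d) (by omega)).comp (ih (by omega))

def Hsp : (i : ℕ) → Submodule ℝ (K n i → ℝ)
  | 0 => ⊤
  | k+1 => LinearMap.ker (Matrix.mulVecLin (W n k)ᵀ)

lemma Hsp_succ {k : ℕ} {f : K n (k+1) → ℝ} (hf : f ∈ Hsp n (k+1)) :
    (W n k)ᵀ *ᵥ f = 0 := by
  rw [Hsp, LinearMap.mem_ker, Matrix.mulVecLin_apply] at hf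
  exact hf

lemma Drec0 (i : ℕ) (f : K n i → ℝ) (hf : f ∈ Hsp n i) :
    (W n i)ᵀ *ᵥ (W n i *ᵥ f) = ((n:ℝ) - ((2*i : ℕ) : ℝ)) • f := by
  rw [Matrix.mulVec_mulVec]
  cases i with
  | zero =>
    rw [W_zero, Matrix.smul_mulVec, Matrix.one_mulVec]
    norm_num
  | succ k =>
    rw [W_comm, Matrix.add_mulVec, Matrix.smul_mulVec, Matrix.one_mulVec,
      ← Matrix.mulVec_mulVec, Hsp_succ n hf, Matrix.mulVec_zero, zero_add]

lemma Drec (i : ℕ) (f : K n i → ℝ) (hf : f ∈ Hsp n i) : ∀ d : ℕ,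
    (W n (i+d))ᵀ *ᵥ (Phi n i (d+1) *ᵥ f)
      = (((d:ℝ)+1) * ((n:ℝ) - ((2*i+d : ℕ) : ℝ))) • (Phi n i d *ᵥ f) := by
  intro d
  induction d with
  | zero =>
    rw [Phi_succ, Phi_zero, Matrix.mul_one, Matrix.one_mulVec]
    have hc : (((0:ℕ):ℝ)+1) * ((n:ℝ) - ((2*i+0 : ℕ) : ℝ)) = ((n:ℝ) - ((2*i : ℕ) : ℝ)) := by
      norm_num
    rw [hc]
    exact Drec0 n i f hf
  | succ d ih =>
    have h1 : Phi n i (d+1+1) *ᵥ f = W n (i+d+1) *ᵥ (Phi n i (d+1) *ᵥ f) := by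
      rw [Phi_succ n i (d+1), ← Matrix.mulVec_mulVec]
      rfl
    have h2 : (W n (i+(d+1)))ᵀ *ᵥ (W n (i+d+1) *ᵥ (Phi n i (d+1) *ᵥ f))
        = ((W n (i+d+1))ᵀ * W n (i+d+1)) *ᵥ (Phi n i (d+1) *ᵥ f) := by
      rw [Matrix.mulVec_mulVec]
      rfl
    have h3 : W n (i+d) *ᵥ (Phi n i d *ᵥ f) = Phi n i (d+1) *ᵥ f := by
      rw [Matrix.mulVec_mulVec, ← Phi_succ]
    rw [h1, h2, W_comm n (i+d), Matrix.add_mulVec, Matrix.smul_mulVec,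
      Matrix.one_mulVec, ← Matrix.mulVec_mulVec, ih, Matrix.mulVec_smul, h3, ← add_smul]
    congr 1
    push_cast
    ring

lemma eigen (i d : ℕ) (hid : 1 ≤ i + d) (f : K n i → ℝ) (hf : f ∈ Hsp n i) :
    Adj n (i+d) *ᵥ (Phi n i d *ᵥ f)
      = ((((i+d : ℕ):ℝ)) * ((n:ℝ) - (((i+d:ℕ)):ℝ)) - (i:ℝ) * ((n:ℝ) + 1 - (i:ℝ)))
          • (Phi n i d *ᵥ f) := by
  cases d with
  | zero =>
    cases i with
    | zero => omega
    | succ k =>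
      rw [Phi_zero, Matrix.one_mulVec]
      show Adj n (k+1) *ᵥ f = _ • f
      have hA : Adj n (k+1) = W n k * (W n k)ᵀ - (((k:ℝ)+1)) • 1 := by
        rw [W_adj n k, add_sub_cancel_right]
      rw [hA, Matrix.sub_mulVec, Matrix.smul_mulVec, Matrix.one_mulVec,
        ← Matrix.mulVec_mulVec, Hsp_succ n hf, Matrix.mulVec_zero, zero_sub, ← neg_smul]
      congr 1
      push_cast
      ring
  | succ e =>
    show Adj n (i+e+1) *ᵥ (Phi n i (e+1) *ᵥ f) = _ • (Phi n i (e+1) *ᵥ f)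
    have hA : Adj n (i+e+1) = W n (i+e) * (W n (i+e))ᵀ - ((((i+e:ℕ)):ℝ)+1) • 1 := by
      rw [W_adj n (i+e), add_sub_cancel_right]
    rw [hA, Matrix.sub_mulVec, Matrix.smul_mulVec, Matrix.one_mulVec,
      ← Matrix.mulVec_mulVec, Drec n i f hf e, Matrix.mulVec_smul, Matrix.mulVec_mulVec,
      ← Phi_succ, ← sub_smul]
    congr 1
    push_cast
    ring
lemma finrank_Hsp (i : ℕ) (h2 : 2*i ≤ n+1) :
    Module.finrank ℝ (Hsp n i) = if i = 0 then 1 else n.choose i - n.choose (i-1) := by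
  cases i with
  | zero =>
    rw [Hsp, if_pos rfl, finrank_top, Module.finrank_pi, card_K, Nat.choose_zero_right]
  | succ k =>
    rw [Hsp, if_neg (by omega)]
    have hrn := LinearMap.finrank_range_add_finrank_ker (Matrix.mulVecLin (W n k)ᵀ)
    have hdim1 : Module.finrank ℝ (K n (k+1) → ℝ) = n.choose (k+1) := by
      rw [Module.finrank_pi, card_K]
    have hdim0 : Module.finrank ℝ (K n k → ℝ) = n.choose k := by
      rw [Module.finrank_pi, card_K]
    rw [hdim1] at hrn
    have hrank : Module.finrank ℝ (LinearMap.range (Matrix.mulVecLin (W n k)ᵀ))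
        = n.choose k := by
      have h1 : ((W n k)ᵀ).rank = (W n k).rank := Matrix.rank_transpose _
      rw [Matrix.rank, Matrix.rank] at h1
      rw [h1]
      have h2' := LinearMap.finrank_range_add_finrank_ker (Matrix.mulVecLin (W n k))
      rw [LinearMap.ker_eq_bot.mpr (W_inj n k (by omega)), finrank_bot, add_zero, hdim0] at h2'
      exact h2'
    rw [hrank] at hrn
    simp only [Nat.add_sub_cancel]
    omega

lemma choose_mono' (m : ℕ) (h : 2*(m+1) ≤ n+1) : n.choose m ≤ n.choose (m+1) := by
  rcases Nat.lt_or_ge (2*(m+1)) (n+1) with h' | h'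
  · apply Nat.choose_le_succ_of_lt_half_left
    have h1 : (m+1) * 2 ≤ n := by omega
    have h2 := (Nat.le_div_iff_mul_le (k := 2) (by norm_num)).mpr h1
    omega
  · have hs := Nat.choose_symm (n := n) (k := m+1) (by omega)
    have he : n - (m+1) = m := by omega
    rw [he] at hs
    exact le_of_eq hs

lemma sum_dims (m : ℕ) (h2 : 2*m ≤ n+1) :
    ∑ i ∈ Finset.range (m+1), (if i = 0 then 1 else n.choose i - n.choose (i-1))
      = n.choose m := by
  induction m with
  | zero => simp
  | succ p ih =>
    rw [Finset.sum_range_succ, ih (by omega), if_neg (by omega)]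
    have hle := choose_mono' n p h2
    simp only [Nat.add_sub_cancel]
    omega

lemma sum_finrank_le {ι : Type*} {V : Type*} [AddCommGroup V] [Module ℝ V]
    [FiniteDimensional ℝ V] (p : ι → Submodule ℝ V) (hp : iSupIndep p) (s : Finset ι) :
    ∑ j ∈ s, Module.finrank ℝ (p j) ≤ Module.finrank ℝ V := by
  have main : ∑ j ∈ s, Module.finrank ℝ (p j) ≤ Module.finrank ℝ ↥(s.sup p) := by
    induction s using Finset.cons_induction with
    | empty => simp
    | cons a s ha ih =>
      rw [Finset.sum_cons, Finset.sup_cons]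
      have hd : Disjoint (p a) (s.sup p) := by
        refine Disjoint.mono_right ?_ (hp.disjoint_biSup (y := ↑s) ha)
        rw [Finset.sup_eq_iSup]
        simp
      have heq := Submodule.finrank_sup_add_finrank_inf_eq (p a) (s.sup p)
      rw [hd.eq_bot, finrank_bot] at heq
      omega
  exact le_trans main (Submodule.finrank_le _)
def lam (i t : ℕ) : ℝ := (t : ℝ) * ((n : ℝ) - (t : ℝ)) - (i : ℝ) * ((n : ℝ) + 1 - (i : ℝ))

lemma lam_inj (t : ℕ) (ht2 : 2*t ≤ n+1) {i j : ℕ} (hi : i ≤ t) (hj : j ≤ t)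
    (hij : i ≠ j) : lam n i t ≠ lam n j t := by
  intro h
  have h1 : ((i:ℝ) - j) * ((n:ℝ) + 1 - i - j) = 0 := by
    unfold lam at h
    linear_combination -h
  rcases mul_eq_zero.mp h1 with h2 | h2
  · exact hij (by exact_mod_cast sub_eq_zero.mp h2)
  · have h3 : (i:ℝ) + (j:ℝ) = (n:ℝ) + 1 := by linarith
    have h4 : i + j = n + 1 := by exact_mod_cast h3
    omega

lemma lower (t : ℕ) (ht1 : 1 ≤ t) (ht2 : 2*t ≤ n+1) (i : ℕ) (hi : i ≤ t) :
    (if i = 0 then 1 else n.choose i - n.choose (i-1))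
      ≤ Module.finrank ℝ
          (Module.End.eigenspace (Matrix.toLin' (Adj n t)) (lam n i t)) := by
  obtain ⟨d, rfl⟩ := Nat.exists_eq_add_of_le hi
  have hinj : Function.Injective (Matrix.mulVecLin (Phi n i d)) := Phi_inj n i d ht2
  have hle : (Hsp n i).map (Matrix.mulVecLin (Phi n i d))
      ≤ Module.End.eigenspace (Matrix.toLin' (Adj n (i+d))) (lam n i (i+d)) := by
    rintro x ⟨f, hf, rfl⟩
    rw [Module.End.mem_eigenspace_iff, Matrix.toLin'_apply]
    simp only [Matrix.mulVecLin_apply]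
    exact eigen n i d (by omega) f hf
  calc (if i = 0 then 1 else n.choose i - n.choose (i-1))
      = Module.finrank ℝ (Hsp n i) := (finrank_Hsp n i (by omega)).symm
    _ = Module.finrank ℝ ((Hsp n i).map (Matrix.mulVecLin (Phi n i d))) :=
        LinearEquiv.finrank_eq (Submodule.equivMapOfInjective _ hinj (Hsp n i))
    _ ≤ _ := Submodule.finrank_mono hle

end JG

/-- Spectrum of the Johnson graph `J(n,t)` for `1 ≤ t ≤ (n+1)/2`: for each
`0 ≤ i ≤ t`, the eigenspace of its adjacency matrix for the eigenvalue
`t(n-t) - i(n+1-i)` has dimension exactly `C(n,i) - C(n,i-1)` (with the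
convention `C(n,-1) = 0`). -/
theorem johnson_graph_spectrum (n t : ℕ) (ht1 : 1 ≤ t) (ht2 : 2 * t ≤ n + 1) :
    ∀ i : ℕ, i ≤ t →
      Module.finrank ℝ
          ↥(Module.End.eigenspace
              (Matrix.toLin'
                (Matrix.of fun S T : {S : Finset (Fin n) // S.card = t} =>
                  if (S.val ∩ T.val).card = t - 1 then (1 : ℝ) else 0))
              ((t : ℝ) * ((n : ℝ) - (t : ℝ)) - (i : ℝ) * ((n : ℝ) + 1 - (i : ℝ))))
        = if i = 0 then 1 else n.choose i - n.choose (i - 1) := by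
  intro i hi
  show Module.finrank ℝ
      (Module.End.eigenspace (Matrix.toLin' (JG.Adj n t)) (JG.lam n i t))
    = if i = 0 then 1 else n.choose i - n.choose (i - 1)
  set F : ℕ → ℕ := fun j => Module.finrank ℝ
      (Module.End.eigenspace (Matrix.toLin' (JG.Adj n t)) (JG.lam n j t)) with hF
  set D : ℕ → ℕ := fun j => if j = 0 then 1 else n.choose j - n.choose (j-1) with hD
  have hlow : ∀ j ∈ Finset.range (t+1), D j ≤ F j := by
    intro j hj
    rw [Finset.mem_range] at hj
    exact JG.lower n t ht1 ht2 j (by omega)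
  have hsumD : ∑ j ∈ Finset.range (t+1), D j = n.choose t := JG.sum_dims n t ht2
  have hsumF : ∑ j ∈ Finset.range (t+1), F j ≤ n.choose t := by
    have hind := Module.End.eigenspaces_iSupIndep
      (Matrix.toLin' (JG.Adj n t) : Module.End ℝ (JG.K n t → ℝ))
    have hinj : ∀ a ∈ Finset.range (t+1), ∀ b ∈ Finset.range (t+1),
        JG.lam n a t = JG.lam n b t → a = b := by
      intro a ha b hb hab
      rw [Finset.mem_range] at ha hb
      by_contra hne
      exact JG.lam_inj n t ht2 (by omega) (by omega) hne hab
    calc ∑ j ∈ Finset.range (t+1), F j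
        = ∑ μ ∈ (Finset.range (t+1)).image (fun j => JG.lam n j t),
            Module.finrank ℝ
              (Module.End.eigenspace (Matrix.toLin' (JG.Adj n t)) μ) := by
          rw [Finset.sum_image hinj]
      _ ≤ Module.finrank ℝ (JG.K n t → ℝ) :=
          JG.sum_finrank_le _ hind _
      _ = n.choose t := by rw [Module.finrank_pi, JG.card_K]
  have hFi := hlow i (by rw [Finset.mem_range]; omega)
  by_contra hne
  have hlt : D i < F i := hFi.lt_of_ne (fun h => hne h.symm)
  have hcon : ∑ j ∈ Finset.range (t+1), D j < ∑ j ∈ Finset.range (t+1), F j :=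
    Finset.sum_lt_sum hlow ⟨i, by rw [Finset.mem_range]; omega, hlt⟩
  omega
end

section
/- Let n and t be integers with 1 ≤ t ≤ (n+1)/2. Let L_t denote the real vector space of homogeneous multilinear polynomials of degree t in variables x_1,…,x_n (spanned by the monomials x^S = Π_{i∈S} x_i for S ⊆ {1,…,n} with |S| = t), and let W_t : L_t → L_{t−1} be the linear map W_t p = Σ_{i=1}^n ∂p/∂x_i. Then the kernel of W_t has dimension C(n,t) − C(n,t−1). -/
open MvPolynomial

/-- The space `L_t` of homogeneous multilinear degree-`t` polynomials in `n`
variables, i.e. the span of the monomials `x^S = Π_{i∈S} x_i` with `|S| = t`. -/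
noncomputable def homogML (n t : ℕ) : Submodule ℝ (MvPolynomial (Fin n) ℝ) :=
  Submodule.span ℝ
    {p | ∃ S : Finset (Fin n), S.card = t ∧ p = ∏ i ∈ S, X i}

/-- The operator `W p = Σ_i ∂p/∂x_i`. -/
noncomputable def Wop (n : ℕ) :
    MvPolynomial (Fin n) ℝ →ₗ[ℝ] MvPolynomial (Fin n) ℝ :=
  ∑ i : Fin n, (pderiv i).toLinearMap

open Finset

variable {n : ℕ}


variable {n : ℕ}

noncomputable def Dop (n : ℕ) : EuclideanSpace ℝ (Finset (Fin n)) →ₗ[ℝ] EuclideanSpace ℝ (Finset (Fin n)) where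
  toFun f := WithLp.toLp 2 (fun T => ∑ i ∈ Tᶜ, f (insert i T))
  map_add' f g := by ext T; simp [Finset.sum_add_distrib]
  map_smul' c f := by ext T; simp [Finset.mul_sum]

noncomputable def Uop (n : ℕ) : EuclideanSpace ℝ (Finset (Fin n)) →ₗ[ℝ] EuclideanSpace ℝ (Finset (Fin n)) where
  toFun f := WithLp.toLp 2 (fun T => ∑ i ∈ T, f (T.erase i))
  map_add' f g := by ext T; simp [Finset.sum_add_distrib]
  map_smul' c f := by ext T; simp [Finset.mul_sum]

def Lsub (n k : ℕ) : Submodule ℝ (EuclideanSpace ℝ (Finset (Fin n))) where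
  carrier := {f | ∀ T : Finset (Fin n), T.card ≠ k → f T = 0}
  zero_mem' := fun T _ => rfl
  add_mem' := by intro f g hf hg T hT; have := hf T hT; have := hg T hT; simp_all
  smul_mem' := by intro c f hf T hT; have := hf T hT; simp_all

/-- generic reindexing lemma -/
theorem sum_erase_eq_sum_insert {M : Type*} [AddCommMonoid M]
    (F : Finset (Fin n) → Fin n → M) :
    ∑ T : Finset (Fin n), ∑ i ∈ T, F (T.erase i) i
      = ∑ S : Finset (Fin n), ∑ i ∈ Sᶜ, F S i := by
  rw [Finset.sum_sigma', Finset.sum_sigma']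
  apply Finset.sum_bij' (fun p _ => (⟨p.1.erase p.2, p.2⟩ : Σ _ : Finset (Fin n), Fin n))
    (fun p _ => (⟨insert p.2 p.1, p.2⟩ : Σ _ : Finset (Fin n), Fin n))
  · rintro ⟨T, i⟩ h
    simp only [Finset.mem_sigma, Finset.mem_univ, true_and] at h ⊢
    simp [h]
  · rintro ⟨S, i⟩ h
    simp only [Finset.mem_sigma, Finset.mem_univ, true_and] at h ⊢
    simp at h
    simp [h]
  · rintro ⟨T, i⟩ h
    simp only [Finset.mem_sigma, Finset.mem_univ, true_and] at h
    simp [Finset.insert_erase h]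
  · rintro ⟨S, i⟩ h
    simp only [Finset.mem_sigma, Finset.mem_univ, true_and] at h
    simp at h
    simp [Finset.erase_insert h]
  · rintro ⟨T, i⟩ h; rfl

theorem inner_Uop (f g : EuclideanSpace ℝ (Finset (Fin n))) :
    inner ℝ (Uop n f) g = (inner ℝ f (Dop n g) : ℝ) := by
  rw [real_inner_comm, real_inner_comm (Dop n g)]
  simp only [PiLp.inner_apply, RCLike.inner_apply, starRingEnd_apply, star_trivial,
    Uop, Dop, LinearMap.coe_mk, AddHom.coe_mk]
  have := sum_erase_eq_sum_insert (n := n) (fun S i => f S * g (insert i S))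
  have e1 : ∀ T : Finset (Fin n), (∑ i ∈ T, f (T.erase i)) * g T
      = ∑ i ∈ T, f (T.erase i) * g (insert i (T.erase i)) := by
    intro T
    rw [Finset.sum_mul]
    exact Finset.sum_congr rfl fun i hi => by rw [Finset.insert_erase hi]
  rw [Finset.sum_congr rfl fun T _ => e1 T, this]
  exact Finset.sum_congr rfl fun S _ => (Finset.mul_sum ..).symm

theorem DU_comm (f : EuclideanSpace ℝ (Finset (Fin n))) (T : Finset (Fin n)) :
    Dop n (Uop n f) T = Uop n (Dop n f) T + ((n : ℝ) - 2 * T.card) * f T := by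
  simp only [Dop, Uop, LinearMap.coe_mk, AddHom.coe_mk]
  have h1 : ∀ i ∈ Tᶜ, (∑ j ∈ insert i T, f ((insert i T).erase j))
      = f T + ∑ j ∈ T, f (insert i (T.erase j)) := by
    intro i hi
    rw [Finset.mem_compl] at hi
    rw [Finset.sum_insert hi, Finset.erase_insert hi]
    congr 1
    apply Finset.sum_congr rfl
    intro j hj
    rw [Finset.erase_insert_of_ne (by rintro rfl; exact hi hj)]
  have h2 : ∀ j ∈ T, (∑ i ∈ (T.erase j)ᶜ, f (insert i (T.erase j)))
      = f T + ∑ i ∈ Tᶜ, f (insert i (T.erase j)) := by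
    intro j hj
    have : (T.erase j)ᶜ = insert j Tᶜ := by
      rw [Finset.compl_erase]
    rw [this, Finset.sum_insert (by simp [hj]), Finset.insert_erase hj]
  rw [Finset.sum_congr rfl h1, Finset.sum_congr rfl h2, Finset.sum_add_distrib,
    Finset.sum_add_distrib, Finset.sum_const, Finset.sum_const, Finset.sum_comm]
  simp only [Finset.card_compl, Fintype.card_fin, nsmul_eq_mul]
  have hle : T.card ≤ n := by simpa using Finset.card_le_card (Finset.subset_univ T)
  push_cast [Nat.cast_sub hle]
  ring

theorem Dop_mem_Lsub {k : ℕ} {f : EuclideanSpace ℝ (Finset (Fin n))}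
    (hf : f ∈ Lsub n (k + 1)) : Dop n f ∈ Lsub n k := by
  intro T hT
  simp only [Dop, LinearMap.coe_mk, AddHom.coe_mk]
  apply Finset.sum_eq_zero
  intro i hi
  apply hf
  rw [Finset.card_insert_of_notMem (Finset.mem_compl.mp hi)]
  omega

theorem Uop_mem_Lsub {k : ℕ} {f : EuclideanSpace ℝ (Finset (Fin n))}
    (hf : f ∈ Lsub n k) : Uop n f ∈ Lsub n (k + 1) := by
  intro T hT
  simp only [Uop, LinearMap.coe_mk, AddHom.coe_mk]
  apply Finset.sum_eq_zero
  intro i hi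
  apply hf
  rw [Finset.card_erase_of_mem hi]
  have : 1 ≤ T.card := Finset.card_pos.mpr ⟨i, hi⟩
  omega

theorem Uop_inj {k : ℕ} (hk : 2 * k < n) {f : EuclideanSpace ℝ (Finset (Fin n))}
    (hf : f ∈ Lsub n k) (hUf : Uop n f = 0) : f = 0 := by
  have key : (0 : ℝ) = inner ℝ (Dop n f) (Dop n f) + ((n : ℝ) - 2 * k) * inner ℝ f f := by
    have h0 : (inner ℝ (Uop n f) (Uop n f) : ℝ) = 0 := by rw [hUf]; simp
    rw [inner_Uop] at h0
    have h1 : (inner ℝ f (Dop n (Uop n f)) : ℝ)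
        = inner ℝ f (Uop n (Dop n f)) + ((n : ℝ) - 2 * k) * inner ℝ f f := by
      simp only [PiLp.inner_apply, RCLike.inner_apply, starRingEnd_apply, star_trivial]
      rw [Finset.mul_sum, ← Finset.sum_add_distrib]
      apply Finset.sum_congr rfl
      intro T _
      rw [DU_comm]
      by_cases hT : T.card = k
      · rw [hT]; ring
      · rw [hf T hT]; ring
    have h2 : (inner ℝ f (Uop n (Dop n f)) : ℝ) = inner ℝ (Dop n f) (Dop n f) := by
      rw [real_inner_comm, inner_Uop]
    rw [h1, h2] at h0
    linarith
  have hn1 : (0:ℝ) ≤ inner ℝ (Dop n f) (Dop n f) := real_inner_self_nonneg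
  have hn2 : (0:ℝ) ≤ inner ℝ f f := real_inner_self_nonneg
  have hpos : (0:ℝ) < (n : ℝ) - 2 * k := by
    have : (2 * k : ℝ) < n := by exact_mod_cast hk
    linarith
  have : (inner ℝ f f : ℝ) = 0 := by nlinarith
  exact inner_self_eq_zero.mp this

noncomputable def LsubEquiv (n k : ℕ) :
    Lsub n k ≃ₗ[ℝ] ({T : Finset (Fin n) // T.card = k} → ℝ) where
  toFun f := fun T => f.1 T.1
  map_add' f g := rfl
  map_smul' c f := rfl
  invFun g := ⟨WithLp.toLp 2 (fun T => if h : T.card = k then g ⟨T, h⟩ else 0), by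
    intro T hT; simp [hT]⟩
  left_inv := by
    rintro ⟨f, hf⟩
    ext T
    by_cases h : T.card = k
    · simp [h]
    · simp [h, hf T h]
  right_inv := by
    intro g
    funext T
    simp [T.2]

theorem finrank_Lsub (n k : ℕ) : Module.finrank ℝ (Lsub n k) = n.choose k := by
  rw [(LsubEquiv n k).finrank_eq]
  simp [Module.finrank_pi, Fintype.card_finset_len]

theorem finrank_ker_Dop (n t : ℕ) (ht1 : 1 ≤ t) (ht2 : 2 * t ≤ n + 1) :
    Module.finrank ℝ ↥(Lsub n t ⊓ LinearMap.ker (Dop n))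
      = n.choose t - n.choose (t - 1) := by
  set W : Submodule ℝ (EuclideanSpace ℝ (Finset (Fin n))) :=
    Submodule.map (Uop n) (Lsub n (t - 1)) with hW
  have htt : t - 1 + 1 = t := by omega
  have hWle : W ≤ Lsub n t := by
    rintro _ ⟨g, hg, rfl⟩
    exact htt ▸ Uop_mem_Lsub hg
  have hker : Lsub n t ⊓ LinearMap.ker (Dop n) = Wᗮ ⊓ Lsub n t := by
    ext f
    simp only [Submodule.mem_inf, LinearMap.mem_ker, Submodule.mem_orthogonal]
    constructor
    · rintro ⟨hft, hDf⟩
      refine ⟨?_, hft⟩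
      rintro _ ⟨g, hg, rfl⟩
      rw [inner_Uop, hDf]
      simp
    · rintro ⟨hOrth, hft⟩
      refine ⟨hft, ?_⟩
      have hDfm : Dop n f ∈ Lsub n (t - 1) := Dop_mem_Lsub (htt ▸ hft)
      have := hOrth _ ⟨Dop n f, hDfm, rfl⟩
      rw [inner_Uop] at this
      rw [real_inner_comm] at this
      exact inner_self_eq_zero.mp this
  have hWrank : Module.finrank ℝ W = n.choose (t - 1) := by
    have hinj : Function.Injective ((Uop n).domRestrict (Lsub n (t - 1))) := by
      rw [← LinearMap.ker_eq_bot, Submodule.eq_bot_iff]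
      rintro ⟨f, hf⟩ hker0
      rw [LinearMap.mem_ker, LinearMap.domRestrict_apply] at hker0
      have hf0 : f = 0 := Uop_inj (by omega) hf hker0
      simp [hf0]
    have hrange : LinearMap.range ((Uop n).domRestrict (Lsub n (t - 1))) = W := by
      rw [LinearMap.range_domRestrict]
    rw [← hrange, LinearMap.finrank_range_of_inj hinj, finrank_Lsub]
  have hsum := Submodule.finrank_add_inf_finrank_orthogonal hWle
  rw [hker]
  rw [finrank_Lsub] at hsum
  omega

noncomputable def expT {n : ℕ} (T : Finset (Fin n)) : Fin n →₀ ℕ :=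
  ∑ i ∈ T, Finsupp.single i 1

theorem expT_apply {T : Finset (Fin n)} (j : Fin n) :
    expT T j = if j ∈ T then 1 else 0 := by
  rw [expT, Finset.sum_apply']
  simp [Finsupp.single_apply]

theorem expT_inj {T S : Finset (Fin n)} (h : expT T = expT S) : T = S := by
  ext j
  have := congrArg (fun g => g j) h
  simp only [expT_apply] at this
  by_cases hT : j ∈ T <;> by_cases hS : j ∈ S <;> simp_all

theorem prod_X_eq (T : Finset (Fin n)) :
    (∏ i ∈ T, (X i : MvPolynomial (Fin n) ℝ)) = monomial (expT T) 1 := by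
  induction T using Finset.cons_induction with
  | empty => simp [expT]
  | cons a s ha ih =>
    rw [Finset.prod_cons, ih, X, monomial_mul]
    simp only [mul_one, expT]
    congr 1
    rw [Finset.cons_eq_insert, Finset.sum_insert ha]

theorem expT_erase {T : Finset (Fin n)} {i : Fin n} (hi : i ∈ T) :
    expT T - Finsupp.single i 1 = expT (T.erase i) := by
  have h := Finset.insert_erase hi
  nth_rewrite 1 [← h]
  rw [expT, Finset.sum_insert (Finset.notMem_erase _ _), add_tsub_cancel_left]
  rfl

noncomputable def Phi (n : ℕ) :
    EuclideanSpace ℝ (Finset (Fin n)) →ₗ[ℝ] MvPolynomial (Fin n) ℝ where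
  toFun f := ∑ T : Finset (Fin n), f T • ∏ i ∈ T, X i
  map_add' f g := by simp [add_smul, Finset.sum_add_distrib]
  map_smul' c f := by simp [Finset.smul_sum, smul_smul]

theorem coeff_Phi (f : EuclideanSpace ℝ (Finset (Fin n))) (T : Finset (Fin n)) :
    coeff (expT T) (Phi n f) = f T := by
  simp only [Phi, LinearMap.coe_mk, AddHom.coe_mk, coeff_sum, prod_X_eq, coeff_smul,
    coeff_monomial, smul_eq_mul, mul_ite, mul_one, mul_zero]
  rw [Finset.sum_congr rfl (fun S _ => by
    rw [if_congr ⟨fun h => expT_inj h, fun h => h ▸ rfl⟩ rfl rfl])]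
  simp [Finset.sum_ite_eq']

theorem Phi_inj (n : ℕ) : Function.Injective (Phi n) := by
  rw [← LinearMap.ker_eq_bot, Submodule.eq_bot_iff]
  intro f hf
  rw [LinearMap.mem_ker] at hf
  ext T
  have := coeff_Phi f T
  rw [hf] at this
  simpa using this.symm

theorem Wop_mono (T : Finset (Fin n)) :
    Wop n (monomial (expT T) (1:ℝ)) = ∑ i ∈ T, monomial (expT (T.erase i)) (1:ℝ) := by
  rw [Wop, LinearMap.sum_apply]
  rw [← Finset.sum_filter_add_sum_filter_not Finset.univ (· ∈ T)]
  have h2 : ∀ i ∈ Finset.univ.filter (¬ · ∈ T),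
      (pderiv i).toLinearMap (monomial (expT T) (1:ℝ)) = 0 := by
    intro i hi
    simp only [Finset.mem_filter] at hi
    simp [pderiv_monomial, expT_apply, hi.2]
  rw [Finset.sum_eq_zero h2, add_zero]
  rw [Finset.sum_congr (by ext i; simp) (fun i (hi : i ∈ T) => ?_)]
  simp [pderiv_monomial, expT_apply, hi, expT_erase hi]

theorem Wop_Phi (f : EuclideanSpace ℝ (Finset (Fin n))) :
    Wop n (Phi n f) = Phi n (Dop n f) := by
  simp only [Phi, LinearMap.coe_mk, AddHom.coe_mk, prod_X_eq]
  rw [map_sum]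
  simp only [map_smul, Wop_mono, Finset.smul_sum]
  have h1 : ∀ T : Finset (Fin n), ∀ i ∈ T,
      f T • monomial (expT (T.erase i)) (1:ℝ)
        = f (insert i (T.erase i)) • monomial (expT (T.erase i)) (1:ℝ) := by
    intro T i hi; rw [Finset.insert_erase hi]
  rw [Finset.sum_congr rfl fun T _ => Finset.sum_congr rfl (h1 T),
    sum_erase_eq_sum_insert (n := n)
      (fun S i => f (insert i S) • monomial (expT S) (1:ℝ))]
  apply Finset.sum_congr rfl
  intro S _
  rw [Dop]
  simp only [LinearMap.coe_mk, AddHom.coe_mk]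
  rw [Finset.sum_smul]

theorem Phi_single (S : Finset (Fin n)) :
    Phi n (WithLp.toLp 2 (fun T => if T = S then (1:ℝ) else 0)) = ∏ i ∈ S, X i := by
  simp only [Phi, LinearMap.coe_mk, AddHom.coe_mk, ite_smul, one_smul, zero_smul]
  simp [Finset.sum_ite_eq']

theorem map_Phi_Lsub (n t : ℕ) :
    Submodule.map (Phi n) (Lsub n t) = homogML n t := by
  apply le_antisymm
  · rintro _ ⟨f, hf, rfl⟩
    have hrepr : Phi n f = ∑ T : Finset (Fin n), f T • ∏ i ∈ T, X i := rfl
    rw [hrepr]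
    apply Submodule.sum_mem
    intro T _
    by_cases hT : T.card = t
    · exact Submodule.smul_mem _ _ (Submodule.subset_span ⟨T, hT, rfl⟩)
    · rw [hf T hT]; simp
  · rw [homogML, Submodule.span_le]
    rintro _ ⟨S, hS, rfl⟩
    refine ⟨WithLp.toLp 2 (fun T => if T = S then 1 else 0), ?_, Phi_single S⟩
    intro T hT
    have hTS : T ≠ S := fun h => hT (h ▸ hS)
    simp [hTS]


/-- For `1 ≤ t ≤ (n+1)/2`, the kernel of `W_t : L_t → L_{t-1}` has dimension
`C(n,t) - C(n,t-1)`. -/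
theorem ker_Wt_dim (n t : ℕ) (ht1 : 1 ≤ t) (ht2 : 2 * t ≤ n + 1) :
    Module.finrank ℝ ↥(homogML n t ⊓ LinearMap.ker (Wop n))
      = n.choose t - n.choose (t - 1) := by
  have hmap : homogML n t ⊓ LinearMap.ker (Wop n)
      = Submodule.map (Phi n) (Lsub n t ⊓ LinearMap.ker (Dop n)) := by
    apply le_antisymm
    · intro p hp
      obtain ⟨hp1, hp2⟩ := Submodule.mem_inf.mp hp
      rw [← map_Phi_Lsub] at hp1
      obtain ⟨f, hf, rfl⟩ := hp1
      refine ⟨f, Submodule.mem_inf.mpr ⟨hf, ?_⟩, rfl⟩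
      rw [LinearMap.mem_ker] at hp2 ⊢
      have h0 : Phi n (Dop n f) = Phi n 0 := by rw [← Wop_Phi, hp2, map_zero]
      exact Phi_inj n h0
    · rintro _ ⟨f, hf, rfl⟩
      obtain ⟨hf1, hf2⟩ := Submodule.mem_inf.mp hf
      refine Submodule.mem_inf.mpr ⟨?_, ?_⟩
      · rw [← map_Phi_Lsub]; exact ⟨f, hf1, rfl⟩
      · rw [LinearMap.mem_ker, Wop_Phi, LinearMap.mem_ker.mp hf2, map_zero]
  rw [hmap, ← (Submodule.equivMapOfInjective _ (Phi_inj n)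
    (Lsub n t ⊓ LinearMap.ker (Dop n))).finrank_eq]
  exact finrank_ker_Dop n t ht1 ht2
end

section
/- Let n and t be integers with 1 ≤ t ≤ n/2. Let p = Σ_{|S|=t} p_S x^S and q = Σ_{|S|=t} q_S x^S be homogeneous multilinear polynomials of degree t in x_1,…,x_n, both satisfying Σ_{i=1}^n ∂p/∂x_i = 0 and Σ_{i=1}^n ∂q/∂x_i = 0. Let ⟨p, q⟩ = Σ_{S ⊆ {1,…,n}, |S|=t} p_S q_S. Then for every x ∈ {0,1}^n: (1/n!)·Σ_{σ ∈ S_n} p(σx)·q(σx) = ⟨p,q⟩·((n−2t)!/n!)·Π_{i=0}^{t−1} (|x| − i)(n − |x| − i), where (σx)_i = x_{σ(i)}. -/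
open MvPolynomial

section Aux
open Finset

variable {n : ℕ}

variable {n : ℕ}

/-- indicator finsupp of a finset -/
noncomputable def indF (S : Finset (Fin n)) : Fin n →₀ ℕ := ∑ i ∈ S, Finsupp.single i 1

lemma indF_apply (S : Finset (Fin n)) (j : Fin n) :
    indF S j = if j ∈ S then 1 else 0 := by
  classical
  rw [indF, Finset.sum_apply']
  split_ifs with h
  · rw [Finset.sum_eq_single j (fun b _ hb => Finsupp.single_eq_of_ne' hb) (by tauto)]
    simp
  · exact Finset.sum_eq_zero fun b hb => Finsupp.single_eq_of_ne (by rintro rfl; exact h hb)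

lemma indF_support (S : Finset (Fin n)) : (indF S).support = S := by
  ext j; simp [Finsupp.mem_support_iff, indF_apply]

lemma indF_injective : Function.Injective (indF (n := n)) := by
  intro S T h
  rw [← indF_support S, ← indF_support T, h]

lemma monomial_indF (S : Finset (Fin n)) :
    (monomial (indF S) (1 : ℝ)) = ∏ i ∈ S, X i := by
  classical
  induction S using Finset.induction with
  | empty => simp [indF, monomial_zero']
  | @insert a s h ih =>
    rw [Finset.prod_insert h, ← ih, indF, Finset.sum_insert h, ← indF,
      monomial_single_add]
    simp

lemma homogML_support {t : ℕ} {p : MvPolynomial (Fin n) ℝ} (hp : p ∈ homogML n t) :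
    ∀ d ∈ p.support, ∃ S : Finset (Fin n), S.card = t ∧ d = indF S := by
  refine Submodule.span_induction ?_ ?_ ?_ ?_ hp
  · rintro q ⟨S, hS, rfl⟩ d hd
    rw [← monomial_indF] at hd
    rw [support_monomial] at hd
    simp only [if_neg (one_ne_zero)] at hd
    exact ⟨S, hS, by simpa using hd⟩
  · simp
  · intro a b _ _ ha hb d hd
    rcases Finset.mem_union.1 (MvPolynomial.support_add hd) with h | h
    · exact ha d h
    · exact hb d h
  · intro c a _ ha d hd
    exact ha d (Finsupp.support_smul hd)

/-- decomposition as sum over t-subsets -/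
lemma homogML_eq_sum {t : ℕ} {p : MvPolynomial (Fin n) ℝ} (hp : p ∈ homogML n t) :
    p = ∑ S ∈ Finset.powersetCard t (Finset.univ : Finset (Fin n)),
          monomial (indF S) (coeff (indF S) p) := by
  classical
  have h1 : p = ∑ d ∈ p.support, monomial d (coeff d p) :=
    (support_sum_monomial_coeff p).symm
  have hsub : p.support ⊆ (Finset.powersetCard t Finset.univ).image indF := by
    intro d hd
    obtain ⟨S, hS, rfl⟩ := homogML_support hp d hd
    exact Finset.mem_image.2 ⟨S, by simp [Finset.mem_powersetCard, hS], rfl⟩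
  calc p = ∑ d ∈ p.support, monomial d (coeff d p) := h1
    _ = ∑ d ∈ (Finset.powersetCard t Finset.univ).image indF, monomial d (coeff d p) :=
        Finset.sum_subset hsub (fun d _ hd => by
          rw [MvPolynomial.notMem_support_iff] at hd; simp [hd])
    _ = _ := Finset.sum_image (fun a _ b _ h => indF_injective h)

lemma eval_homogML {t : ℕ} {p : MvPolynomial (Fin n) ℝ} (hp : p ∈ homogML n t)
    (y : Fin n → ℝ) :
    eval y p = ∑ S ∈ Finset.powersetCard t (Finset.univ : Finset (Fin n)),
        coeff (indF S) p * ∏ i ∈ S, y i := by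
  conv_lhs => rw [homogML_eq_sum hp]
  rw [map_sum]
  refine Finset.sum_congr rfl fun S _ => ?_
  rw [eval_monomial]
  congr 1
  rw [Finsupp.prod, indF_support]
  refine Finset.prod_congr rfl fun i hi => ?_
  rw [indF_apply, if_pos hi, pow_one]

lemma indF_sub_single {S : Finset (Fin n)} {i : Fin n} (hi : i ∈ S) :
    indF S - Finsupp.single i 1 = indF (S.erase i) := by
  ext j
  simp only [Finsupp.tsub_apply, indF_apply, Finsupp.single_apply, Finset.mem_erase]
  rcases eq_or_ne j i with rfl | hj
  · simp [hi]
  · simp [hj, Ne.symm hj]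

lemma kernel_cond {t : ℕ} (ht1 : 1 ≤ t) {p : MvPolynomial (Fin n) ℝ}
    (hp : p ∈ homogML n t) (hpk : Wop n p = 0) :
    ∀ R : Finset (Fin n), R.card = t - 1 →
      ∑ i ∈ Rᶜ, coeff (indF (insert i R)) p = 0 := by
  classical
  intro R hR
  have h0 : coeff (indF R) (Wop n p) = 0 := by rw [hpk]; simp
  set cS : Finset (Fin n) → ℝ := fun S => coeff (indF S) p with hc
  have hdec : p = ∑ S ∈ Finset.powersetCard t (Finset.univ : Finset (Fin n)),
      monomial (indF S) (cS S) := homogML_eq_sum hp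
  rw [Wop, LinearMap.sum_apply] at h0
  have h1 : ∀ i : Fin n, coeff (indF R) ((pderiv i).toLinearMap p)
      = if i ∈ R then 0 else cS (insert i R) := by
    intro i
    conv_lhs => rw [hdec]
    rw [map_sum, MvPolynomial.coeff_sum]
    simp only [Derivation.coeFn_coe]
    have hterm : ∀ S : Finset (Fin n),
        coeff (indF R) (pderiv i (monomial (indF S) (cS S)))
        = if indF S - Finsupp.single i 1 = indF R then cS S * ((indF S i : ℕ) : ℝ) else 0 := by
      intro S
      rw [pderiv_monomial, coeff_monomial]
    by_cases hiR : i ∈ R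
    · rw [if_pos hiR]
      refine Finset.sum_eq_zero fun S _ => ?_
      rw [hterm]
      split_ifs with hcond
      · exfalso
        have := congrArg (fun f => f i) hcond
        simp only [Finsupp.tsub_apply] at this
        rw [indF_apply, indF_apply, if_pos hiR] at this
        rw [Finsupp.single_eq_same] at this
        split_ifs at this <;> omega
      · rfl
    · rw [if_neg hiR]
      have hmem : insert i R ∈ Finset.powersetCard t (Finset.univ : Finset (Fin n)) := by
        rw [Finset.mem_powersetCard]
        refine ⟨Finset.subset_univ _, ?_⟩
        rw [Finset.card_insert_of_notMem hiR, hR]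
        omega
      rw [Finset.sum_eq_single (insert i R)]
      · rw [hterm, if_pos, indF_apply, if_pos (Finset.mem_insert_self i R)]
        · norm_num
        · rw [indF_sub_single (Finset.mem_insert_self i R), Finset.erase_insert hiR]
      · intro S _ hSne
        rw [hterm]
        by_cases hiS : i ∈ S
        · rw [if_neg]
          intro hcond
          rw [indF_sub_single hiS] at hcond
          exact hSne (by rw [← indF_injective hcond, Finset.insert_erase hiS])
        · rw [indF_apply, if_neg hiS]
          split_ifs <;> simp
      · intro habs
        exact absurd hmem habs
  rw [MvPolynomial.coeff_sum] at h0
  rw [Finset.sum_congr rfl (fun i _ => h1 i)] at h0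
  rw [← h0, eq_comm]
  rw [Finset.sum_ite, Finset.sum_const_zero, zero_add]
  congr 1
  ext i
  simp

/-- abstract coefficient setting -/
noncomputable def Wsum (t : ℕ) (c : Finset (Fin n) → ℝ) (U : Finset (Fin n)) (j : ℕ) : ℝ :=
  ∑ S ∈ (Finset.powersetCard t (Finset.univ : Finset (Fin n))).filter
      (fun S => (S ∩ U).card = j), c S

lemma W_rel (t : ℕ) (ht1 : 1 ≤ t) (c : Finset (Fin n) → ℝ)
    (kc : ∀ R : Finset (Fin n), R.card = t - 1 → ∑ a ∈ Rᶜ, c (insert a R) = 0)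
    (U : Finset (Fin n)) (hU : U.card = t) (i : ℕ) (hi : i < t) :
    ((t - i : ℕ) : ℝ) * Wsum t c U i + ((i + 1 : ℕ) : ℝ) * Wsum t c U (i + 1) = 0 := by
  classical
  set 𝒮 := Finset.powersetCard t (Finset.univ : Finset (Fin n)) with h𝒮
  set ℛ := (Finset.powersetCard (t-1) (Finset.univ : Finset (Fin n))).filter
      (fun R => (R ∩ U).card = i) with hℛ
  have h0 : ∑ R ∈ ℛ, ∑ a ∈ Rᶜ, c (insert a R) = 0 := by
    refine Finset.sum_eq_zero fun R hR => ?_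
    rw [hℛ, Finset.mem_filter, Finset.mem_powersetCard] at hR
    exact kc R hR.1.2
  -- reindex to pairs (S, a) with a ∈ S
  have h1 : ∑ R ∈ ℛ, ∑ a ∈ Rᶜ, c (insert a R)
      = ∑ S ∈ 𝒮, ∑ a ∈ S.filter (fun a => ((S.erase a) ∩ U).card = i), c S := by
    rw [Finset.sum_sigma' ℛ (fun R => Rᶜ) (fun R a => c (insert a R)),
        Finset.sum_sigma' 𝒮 (fun S => S.filter (fun a => ((S.erase a) ∩ U).card = i))
          (fun S _ => c S)]
    refine Finset.sum_nbij' (fun x => ⟨insert x.2 x.1, x.2⟩) (fun y => ⟨y.1.erase y.2, y.2⟩)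
      ?_ ?_ ?_ ?_ ?_
    · rintro ⟨R, a⟩ hx
      rw [Finset.mem_sigma] at hx
      obtain ⟨hR, ha⟩ := hx
      rw [hℛ, Finset.mem_filter, Finset.mem_powersetCard] at hR
      rw [Finset.mem_compl] at ha
      rw [Finset.mem_sigma]
      constructor
      · rw [h𝒮, Finset.mem_powersetCard]
        refine ⟨Finset.subset_univ _, ?_⟩
        rw [Finset.card_insert_of_notMem ha, hR.1.2]
        omega
      · rw [Finset.mem_filter]
        refine ⟨Finset.mem_insert_self _ _, ?_⟩
        rw [Finset.erase_insert ha, hR.2]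
    · rintro ⟨S, a⟩ hy
      rw [Finset.mem_sigma] at hy
      obtain ⟨hS, ha⟩ := hy
      rw [Finset.mem_filter] at ha
      rw [h𝒮, Finset.mem_powersetCard] at hS
      rw [Finset.mem_sigma]
      constructor
      · rw [hℛ, Finset.mem_filter, Finset.mem_powersetCard]
        refine ⟨⟨Finset.subset_univ _, ?_⟩, ha.2⟩
        rw [Finset.card_erase_of_mem ha.1, hS.2]
      · rw [Finset.mem_compl]
        exact Finset.notMem_erase _ _
    · rintro ⟨R, a⟩ hx
      rw [Finset.mem_sigma, Finset.mem_compl] at hx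
      simp only
      congr 1
      exact Finset.erase_insert hx.2
    · rintro ⟨S, a⟩ hy
      rw [Finset.mem_sigma, Finset.mem_filter] at hy
      simp only
      congr 1
      exact Finset.insert_erase hy.2.1
    · rintro ⟨R, a⟩ _
      rfl
  -- evaluate inner counts
  have h2 : ∀ S ∈ 𝒮, ∑ a ∈ S.filter (fun a => ((S.erase a) ∩ U).card = i), c S
      = ((if (S ∩ U).card = i + 1 then ((i+1 : ℕ) : ℝ) else 0)
        + (if (S ∩ U).card = i then ((t - i : ℕ) : ℝ) else 0)) * c S := by
    intro S hS
    rw [h𝒮, Finset.mem_powersetCard] at hS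
    rw [Finset.sum_const, nsmul_eq_mul]
    congr 1
    have hsplit : S.filter (fun a => ((S.erase a) ∩ U).card = i)
        = (if (S ∩ U).card = i + 1 then S ∩ U else ∅)
          ∪ (if (S ∩ U).card = i then S \ U else ∅) := by
      ext a
      simp only [Finset.mem_filter, Finset.mem_union]
      constructor
      · rintro ⟨haS, hcard⟩
        rw [Finset.erase_inter] at hcard
        by_cases haU : a ∈ S ∩ U
        · left
          have hj : (S ∩ U).card = i + 1 := by
            rw [Finset.card_erase_of_mem haU] at hcard
            have : 1 ≤ (S ∩ U).card := Finset.card_pos.2 ⟨a, haU⟩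
            omega
          rw [if_pos hj]; exact haU
        · right
          rw [Finset.erase_eq_of_notMem haU] at hcard
          rw [if_pos hcard]
          exact Finset.mem_sdiff.2 ⟨haS, fun h => haU (Finset.mem_inter.2 ⟨haS, h⟩)⟩
      · rintro (ha | ha)
        · split_ifs at ha with hj
          · have haU := ha
            rw [Finset.mem_inter] at haU
            refine ⟨haU.1, ?_⟩
            rw [Finset.erase_inter, Finset.card_erase_of_mem ha, hj]
            omega
          · exact absurd ha (Finset.notMem_empty a)
        · split_ifs at ha with hj
          · rw [Finset.mem_sdiff] at ha
            refine ⟨ha.1, ?_⟩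
            rw [Finset.erase_inter, Finset.erase_eq_of_notMem
              (fun h => ha.2 (Finset.mem_inter.1 h).2), hj]
          · exact absurd ha (Finset.notMem_empty a)
    rw [hsplit]
    have hdisj : Disjoint (if (S ∩ U).card = i + 1 then S ∩ U else ∅)
        (if (S ∩ U).card = i then S \ U else ∅) := by
      split_ifs with ha hb
      · omega
      · simp
      · simp
      · simp
    rw [Finset.card_union_of_disjoint hdisj, Nat.cast_add]
    congr 1
    · split_ifs with h
      · rw [h]
      · simp
    · split_ifs with h
      · have hcd := Finset.card_sdiff_add_card_inter S U
        congr 1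
        omega
      · simp
  rw [Finset.sum_congr rfl h2] at h1
  rw [h1] at h0
  have e1 : ((i + 1 : ℕ) : ℝ) * Wsum t c U (i+1)
      = ∑ S ∈ 𝒮, (if (S ∩ U).card = i + 1 then ((i+1 : ℕ) : ℝ) else 0) * c S := by
    rw [Wsum, Finset.mul_sum, Finset.sum_filter]
    exact Finset.sum_congr rfl fun S _ => by split_ifs <;> simp
  have e2 : ((t - i : ℕ) : ℝ) * Wsum t c U i
      = ∑ S ∈ 𝒮, (if (S ∩ U).card = i then ((t - i : ℕ) : ℝ) else 0) * c S := by
    rw [Wsum, Finset.mul_sum, Finset.sum_filter]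
    exact Finset.sum_congr rfl fun S _ => by split_ifs <;> simp
  rw [e1, e2, ← Finset.sum_add_distrib]
  exact Eq.trans (Finset.sum_congr rfl fun S _ => by ring) h0

lemma W_top (t : ℕ) (c : Finset (Fin n) → ℝ) (U : Finset (Fin n)) (hU : U.card = t) :
    Wsum t c U t = c U := by
  classical
  rw [Wsum]
  rw [Finset.sum_eq_single U]
  · intro S hS hne
    exfalso
    rw [Finset.mem_filter, Finset.mem_powersetCard] at hS
    have h1 : S ∩ U ⊆ S := Finset.inter_subset_left
    have h2 : S ∩ U = S := Finset.eq_of_subset_of_card_le h1 (by omega)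
    have h3 : S ⊆ U := h2 ▸ Finset.inter_subset_right
    exact hne (Finset.eq_of_subset_of_card_le h3 (by omega))
  · intro h
    exfalso
    refine h ?_
    rw [Finset.mem_filter, Finset.mem_powersetCard]
    exact ⟨⟨Finset.subset_univ _, hU⟩, by rw [Finset.inter_self, hU]⟩

lemma W_solve (t : ℕ) (ht1 : 1 ≤ t) (c : Finset (Fin n) → ℝ)
    (kc : ∀ R : Finset (Fin n), R.card = t - 1 → ∑ a ∈ Rᶜ, c (insert a R) = 0)
    (U : Finset (Fin n)) (hU : U.card = t) :
    ∀ j ≤ t, Wsum t c U j = (-1 : ℝ) ^ (t - j) * (t.choose j : ℝ) * c U := by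
  classical
  suffices h : ∀ d ≤ t, Wsum t c U (t - d) = (-1 : ℝ) ^ d * (t.choose (t - d) : ℝ) * c U by
    intro j hj
    have := h (t - j) (Nat.sub_le _ _)
    rwa [Nat.sub_sub_self hj] at this
  intro d hd
  induction d with
  | zero => simp [W_top t c U hU]
  | succ d ih =>
    have hd' : d ≤ t := le_of_lt (Nat.lt_of_succ_le hd)
    have ihv := ih hd'
    have hi : t - (d + 1) < t := by omega
    have hrel := W_rel t ht1 c kc U hU (t - (d + 1)) hi
    have hidx : t - (d + 1) + 1 = t - d := by omega
    rw [hidx] at hrel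
    have hcast : ((t - (t - (d+1)) : ℕ) : ℝ) = ((d + 1 : ℕ) : ℝ) := by
      congr 1
      omega
    rw [hcast, ihv] at hrel
    -- hrel : (d+1) * W(t-(d+1)) + (t-d) * ((-1)^d * choose * cU) = 0
    have hchoose : ((t - d : ℕ) : ℝ) * (t.choose (t - d) : ℝ)
        = ((d + 1 : ℕ) : ℝ) * (t.choose (t - (d + 1)) : ℝ) := by
      have h1 : t.choose ((t - (d+1)) + 1) * ((t - (d+1)) + 1) = t.choose (t - (d+1)) * (t - (t - (d+1))) :=
        Nat.choose_succ_right_eq t (t - (d+1))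
      rw [hidx] at h1
      have h2 : t - (t - (d+1)) = d + 1 := by omega
      rw [h2] at h1
      have := congrArg (fun m : ℕ => (m : ℝ)) h1
      push_cast at this ⊢
      linarith
    have hne : ((d + 1 : ℕ) : ℝ) ≠ 0 := by positivity
    have key : ((d + 1 : ℕ) : ℝ) * Wsum t c U (t - (d + 1))
        = ((d + 1 : ℕ) : ℝ) * ((-1 : ℝ) ^ (d + 1) * (t.choose (t - (d + 1)) : ℝ) * c U) := by
      calc ((d + 1 : ℕ) : ℝ) * Wsum t c U (t - (d + 1))
          = -(((t - d : ℕ) : ℝ) * ((-1 : ℝ) ^ d * (t.choose (t - d) : ℝ) * c U)) := by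
            linarith
        _ = (((t - d : ℕ) : ℝ) * (t.choose (t - d) : ℝ)) * (-(-1 : ℝ) ^ d * c U) := by ring
        _ = (((d + 1 : ℕ) : ℝ) * (t.choose (t - (d + 1)) : ℝ)) * (-(-1 : ℝ) ^ d * c U) := by
            rw [hchoose]
        _ = ((d + 1 : ℕ) : ℝ) * ((-1 : ℝ) ^ (d + 1) * (t.choose (t - (d + 1)) : ℝ) * c U) := by
            ring
    exact mul_left_cancel₀ hne key

lemma key_kernel_identity (t : ℕ) (ht1 : 1 ≤ t) (c : Finset (Fin n) → ℝ)
    (kc : ∀ R : Finset (Fin n), R.card = t - 1 → ∑ a ∈ Rᶜ, c (insert a R) = 0)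
    (U : Finset (Fin n)) (hU : U.card = t) (G : ℕ → ℝ) :
    ∑ S ∈ Finset.powersetCard t (Finset.univ : Finset (Fin n)), c S * G ((S ∩ U).card)
      = c U * ∑ j ∈ Finset.range (t + 1),
          (-1 : ℝ) ^ (t - j) * (t.choose j : ℝ) * G j := by
  classical
  have hmaps : ∀ S ∈ Finset.powersetCard t (Finset.univ : Finset (Fin n)),
      (S ∩ U).card ∈ Finset.range (t + 1) := by
    intro S _
    rw [Finset.mem_range]
    have : (S ∩ U).card ≤ U.card := Finset.card_le_card Finset.inter_subset_right
    omega
  rw [← Finset.sum_fiberwise_of_maps_to hmaps (fun S => c S * G ((S ∩ U).card))]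
  rw [Finset.mul_sum]
  refine Finset.sum_congr rfl fun j hjmem => ?_
  have : ∑ S ∈ (Finset.powersetCard t (Finset.univ : Finset (Fin n))).filter
      (fun S => (S ∩ U).card = j), c S * G ((S ∩ U).card)
      = (∑ S ∈ (Finset.powersetCard t (Finset.univ : Finset (Fin n))).filter
          (fun S => (S ∩ U).card = j), c S) * G j := by
    rw [Finset.sum_mul]
    refine Finset.sum_congr rfl fun S hS => ?_
    rw [Finset.mem_filter] at hS
    rw [hS.2]
  rw [this]
  have hj : j ≤ t := by
    rw [Finset.mem_range] at hjmem
    omega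
  rw [show (∑ S ∈ (Finset.powersetCard t (Finset.univ : Finset (Fin n))).filter
      (fun S => (S ∩ U).card = j), c S) = Wsum t c U j from rfl,
    W_solve t ht1 c kc U hU j hj]
  ring

lemma exists_perm_image (U V : Finset (Fin n)) (h : U.card = V.card) :
    ∃ τ : Equiv.Perm (Fin n), U.image τ = V := by
  classical
  have hc1 : Fintype.card ↥U = Fintype.card ↥V := by
    simp [Fintype.card_coe, h]
  have hc2 : Fintype.card {a : Fin n // a ∉ U} = Fintype.card {a : Fin n // a ∉ V} := by
    have h1 : Fintype.card {a : Fin n // a ∉ U} = n - U.card := by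
      simp [Fintype.card_subtype_compl, Fintype.card_coe]
    have h2 : Fintype.card {a : Fin n // a ∉ V} = n - V.card := by
      simp [Fintype.card_subtype_compl, Fintype.card_coe]
    rw [h1, h2, h]
  let e1 : ↥U ≃ ↥V := Fintype.equivOfCardEq hc1
  let e2 : {a : Fin n // a ∉ U} ≃ {a : Fin n // a ∉ V} := Fintype.equivOfCardEq hc2
  let τ : Equiv.Perm (Fin n) :=
    (Equiv.sumCompl (· ∈ U)).symm.trans ((e1.sumCongr e2).trans (Equiv.sumCompl (· ∈ V)))
  refine ⟨τ, ?_⟩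
  have hsub : U.image τ ⊆ V := by
    intro b hb
    rw [Finset.mem_image] at hb
    obtain ⟨a, ha, rfl⟩ := hb
    show τ a ∈ V
    have : τ a = (e1 ⟨a, ha⟩ : Fin n) := by
      simp only [τ, Equiv.trans_apply]
      rw [Equiv.sumCompl_symm_apply_of_pos ha]
      rfl
    rw [this]
    exact (e1 ⟨a, ha⟩).2
  refine Finset.eq_of_subset_of_card_le hsub ?_
  rw [Finset.card_image_of_injective _ τ.injective, h]


lemma prod_idem_absorb {f : Fin n → ℝ} (hf : ∀ i, f i * f i = f i)
    {U : Finset (Fin n)} {c : Fin n} (hc : c ∈ U) :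
    (∏ i ∈ U, f i) * f c = ∏ i ∈ U, f i := by
  rw [← Finset.mul_prod_erase U _ hc]
  calc (f c * ∏ i ∈ U.erase c, f i) * f c
      = (∏ i ∈ U.erase c, f i) * (f c * f c) := by ring
    _ = (∏ i ∈ U.erase c, f i) * f c := by rw [hf c]
    _ = f c * ∏ i ∈ U.erase c, f i := by ring

lemma prod_idem_absorb_subset {f : Fin n → ℝ} (hf : ∀ i, f i * f i = f i) :
    ∀ (W : Finset (Fin n)) {Z : Finset (Fin n)}, W ⊆ Z →
      (∏ i ∈ Z, f i) * ∏ i ∈ W, f i = ∏ i ∈ Z, f i := by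
  intro W
  induction W using Finset.induction with
  | empty => intro Z _; simp
  | @insert a W ha ih =>
    intro Z hWZ
    have haZ : a ∈ Z := hWZ (Finset.mem_insert_self a W)
    have hWZ' : W ⊆ Z := fun b hb => hWZ (Finset.mem_insert_of_mem hb)
    rw [Finset.prod_insert ha]
    calc (∏ i ∈ Z, f i) * (f a * ∏ i ∈ W, f i)
        = ((∏ i ∈ Z, f i) * f a) * ∏ i ∈ W, f i := by ring
      _ = (∏ i ∈ Z, f i) * ∏ i ∈ W, f i := by rw [prod_idem_absorb hf haZ]
      _ = ∏ i ∈ Z, f i := ih hWZ'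

lemma prod_union_idem {f : Fin n → ℝ} (hf : ∀ i, f i * f i = f i)
    (S T : Finset (Fin n)) :
    (∏ i ∈ S, f i) * (∏ i ∈ T, f i) = ∏ i ∈ S ∪ T, f i := by
  rw [← Finset.prod_union_inter]
  exact prod_idem_absorb_subset hf (S ∩ T)
    (Finset.Subset.trans Finset.inter_subset_left Finset.subset_union_left)

section gcount
variable (x : Fin n → ℝ) (hx : ∀ i, x i = 0 ∨ x i = 1)

lemma g_sym (τ : Equiv.Perm (Fin n)) (U : Finset (Fin n)) :
    ∑ σ : Equiv.Perm (Fin n), ∏ i ∈ U.image τ, x (σ i)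
      = ∑ σ : Equiv.Perm (Fin n), ∏ i ∈ U, x (σ i) := by
  have h1 : ∀ σ : Equiv.Perm (Fin n), ∏ i ∈ U.image τ, x (σ i) = ∏ i ∈ U, x (σ (τ i)) :=
    fun σ => Finset.prod_image (fun a _ b _ hab => τ.injective hab)
  rw [Finset.sum_congr rfl (fun σ _ => h1 σ)]
  exact Fintype.sum_equiv (Equiv.mulRight τ) _ _ (fun σ => by
    refine Finset.prod_congr rfl fun i _ => ?_
    simp [Equiv.Perm.mul_apply])

include hx in
lemma prod_absorb {U : Finset (Fin n)} {f : Fin n → Fin n} {c : Fin n} (hc : c ∈ U) :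
    (∏ i ∈ U, x (f i)) * x (f c) = ∏ i ∈ U, x (f i) := by
  rw [← Finset.mul_prod_erase U _ hc]
  have hid : x (f c) * x (f c) = x (f c) := by rcases hx (f c) with h | h <;> rw [h] <;> ring
  calc (x (f c) * ∏ i ∈ U.erase c, x (f i)) * x (f c)
      = (∏ i ∈ U.erase c, x (f i)) * (x (f c) * x (f c)) := by ring
    _ = (∏ i ∈ U.erase c, x (f i)) * x (f c) := by rw [hid]
    _ = x (f c) * ∏ i ∈ U.erase c, x (f i) := by ring

include hx in
lemma g_rec (U : Finset (Fin n)) :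
    ∑ c ∈ Uᶜ, ∑ σ : Equiv.Perm (Fin n), ∏ i ∈ insert c U, x (σ i)
      = ((∑ l, x l) - U.card) * ∑ σ : Equiv.Perm (Fin n), ∏ i ∈ U, x (σ i) := by
  rw [Finset.sum_comm]
  rw [Finset.mul_sum]
  refine Finset.sum_congr rfl fun σ _ => ?_
  have h1 : ∀ c ∈ Uᶜ, ∏ i ∈ insert c U, x (σ i) = x (σ c) * ∏ i ∈ U, x (σ i) :=
    fun c hc => Finset.prod_insert (Finset.mem_compl.1 hc)
  rw [Finset.sum_congr rfl h1, ← Finset.sum_mul]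
  have h2 : ∑ c ∈ Uᶜ, x (σ c) = (∑ l, x l) - ∑ c ∈ U, x (σ c) := by
    have : ∑ c ∈ U, x (σ c) + ∑ c ∈ Uᶜ, x (σ c) = ∑ c : Fin n, x (σ c) :=
      Finset.sum_add_sum_compl U _
    have hall : ∑ c : Fin n, x (σ c) = ∑ l, x l := Equiv.sum_comp σ x
    linarith
  rw [h2, sub_mul, sub_mul]
  congr 1
  rw [Finset.sum_mul]
  have h3 : ∀ c ∈ U, x (σ c) * ∏ i ∈ U, x (σ i) = ∏ i ∈ U, x (σ i) := by
    intro c hc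
    rw [mul_comm]
    exact prod_absorb x hx hc
  rw [Finset.sum_congr rfl h3, Finset.sum_const, nsmul_eq_mul]
end gcount

lemma g_formula (x : Fin n → ℝ) (hx : ∀ i, x i = 0 ∨ x i = 1) (m : ℕ) :
    ∀ U : Finset (Fin n), U.card = m →
    ∑ σ : Equiv.Perm (Fin n), ∏ i ∈ U, x (σ i)
      = ((n - m).factorial : ℝ) * ∏ i ∈ Finset.range m, ((∑ l, x l) - (i : ℝ)) := by
  induction m with
  | zero =>
    intro U hU
    rw [Finset.card_eq_zero] at hU
    subst hU
    simp only [Finset.prod_empty, Finset.sum_const, Finset.range_zero, Nat.sub_zero,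
      nsmul_eq_mul, mul_one, Finset.card_univ]
    rw [Fintype.card_perm, Fintype.card_fin]
  | succ m ih =>
    intro U hU
    have hmn : m + 1 ≤ n := by
      have h1 : U.card ≤ Finset.univ.card := Finset.card_le_univ U
      rwa [Finset.card_univ, Fintype.card_fin, hU] at h1
    obtain ⟨c, hc⟩ : U.Nonempty := Finset.card_pos.1 (by omega)
    set U₀ := U.erase c with hU₀def
    have hU₀ : U₀.card = m := by
      rw [hU₀def, Finset.card_erase_of_mem hc, hU]
      omega
    have hrec := g_rec x hx U₀
    have hsame : ∀ c' ∈ U₀ᶜ, ∑ σ : Equiv.Perm (Fin n), ∏ i ∈ insert c' U₀, x (σ i)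
        = ∑ σ : Equiv.Perm (Fin n), ∏ i ∈ U, x (σ i) := by
      intro c' hc'
      have hcard : U.card = (insert c' U₀).card := by
        rw [Finset.card_insert_of_notMem (Finset.mem_compl.1 hc'), hU₀, hU]
      obtain ⟨τ, hτ⟩ := exists_perm_image U (insert c' U₀) hcard
      rw [← hτ]
      exact g_sym x τ U
    rw [Finset.sum_congr rfl hsame, Finset.sum_const, Finset.card_compl, hU₀,
      Fintype.card_fin, nsmul_eq_mul] at hrec
    have hne : ((n - m : ℕ) : ℝ) ≠ 0 := by
      have : 1 ≤ n - m := by omega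
      positivity
    refine mul_left_cancel₀ hne ?_
    rw [hrec, ih U₀ hU₀]
    have hfac : ((n - m).factorial : ℝ)
        = ((n - m : ℕ) : ℝ) * ((n - (m + 1)).factorial : ℝ) := by
      have h1 : n - m = (n - (m + 1)) + 1 := by omega
      rw [h1, Nat.factorial_succ]
      push_cast
      ring
    rw [Finset.prod_range_succ, hfac]
    ring

lemma core_identity : ∀ (t N : ℕ), t ≤ N → ∀ y : ℝ,
    ∑ r ∈ Finset.range (t+1), (-1 : ℝ)^r * (t.choose r : ℝ)
        * (∏ i ∈ Finset.range r, (y - (i:ℝ))) * ((N - r).factorial : ℝ)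
    = ((N - t).factorial : ℝ) * ∏ i ∈ Finset.range t, ((N:ℝ) - y - (i:ℝ)) := by
  intro t
  induction t with
  | zero => intro N _ y; simp
  | succ t ih =>
    intro N hN y
    have htN : t ≤ N - 1 := by omega
    have hN1 : 1 ≤ N := by omega
    -- peel off r = 0
    rw [Finset.sum_range_succ']
    have hsplit : ∀ s ∈ Finset.range (t+1),
        (-1 : ℝ)^(s+1) * ((t+1).choose (s+1) : ℝ)
          * (∏ i ∈ Finset.range (s+1), (y - (i:ℝ))) * ((N - (s+1)).factorial : ℝ)
        = (-1 : ℝ)^(s+1) * (t.choose (s+1) : ℝ)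
            * (∏ i ∈ Finset.range (s+1), (y - (i:ℝ))) * ((N - (s+1)).factorial : ℝ)
          + (-1) * ((-1 : ℝ)^s * (t.choose s : ℝ)
            * ((∏ i ∈ Finset.range s, ((y-1) - (i:ℝ))) * y) * (((N-1) - s).factorial : ℝ)) := by
      intro s _
      have hch : ((t+1).choose (s+1) : ℝ) = (t.choose s : ℝ) + (t.choose (s+1) : ℝ) := by
        rw [Nat.choose_succ_succ]
        push_cast
        ring
      have hP : ∏ i ∈ Finset.range (s+1), (y - (i:ℝ))
          = (∏ i ∈ Finset.range s, ((y-1) - (i:ℝ))) * y := by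
        rw [Finset.prod_range_succ']
        congr 1
        · refine Finset.prod_congr rfl fun i _ => ?_
          push_cast
          ring
        · norm_num
      have hidx : N - (s+1) = (N-1) - s := by omega
      rw [hch, hP, hidx]
      ring
    rw [Finset.sum_congr rfl hsplit, Finset.sum_add_distrib]
    have hA : (∑ s ∈ Finset.range (t+1), (-1 : ℝ)^(s+1) * (t.choose (s+1) : ℝ)
          * (∏ i ∈ Finset.range (s+1), (y - (i:ℝ))) * ((N - (s+1)).factorial : ℝ))
        + (-1 : ℝ)^0 * ((t+1).choose 0 : ℝ)
          * (∏ i ∈ Finset.range 0, (y - (i:ℝ))) * ((N - 0).factorial : ℝ)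
        = ((N - t).factorial : ℝ) * ∏ i ∈ Finset.range t, ((N:ℝ) - y - (i:ℝ)) := by
      have h0 : (-1 : ℝ)^0 * ((t+1).choose 0 : ℝ)
          * (∏ i ∈ Finset.range 0, (y - (i:ℝ))) * ((N - 0).factorial : ℝ)
          = (-1 : ℝ)^0 * (t.choose 0 : ℝ)
          * (∏ i ∈ Finset.range 0, (y - (i:ℝ))) * ((N - 0).factorial : ℝ) := by
        simp
      rw [h0]
      rw [← Finset.sum_range_succ' (fun r => (-1:ℝ)^r * (t.choose r : ℝ)
        * (∏ i ∈ Finset.range r, (y - (i:ℝ))) * ((N - r).factorial : ℝ)) (t+1)]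
      rw [Finset.sum_range_succ]
      rw [Nat.choose_succ_self]
      norm_num
      exact ih N (by omega) y
    have hB : ∑ s ∈ Finset.range (t+1), (-1 : ℝ) * ((-1 : ℝ)^s * (t.choose s : ℝ)
          * ((∏ i ∈ Finset.range s, ((y-1) - (i:ℝ))) * y) * (((N-1) - s).factorial : ℝ))
        = -y * (((N-1) - t).factorial : ℝ)
            * ∏ i ∈ Finset.range t, ((N:ℝ) - y - (i:ℝ)) := by
      have := ih (N-1) htN (y-1)
      calc ∑ s ∈ Finset.range (t+1), (-1 : ℝ) * ((-1 : ℝ)^s * (t.choose s : ℝ)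
            * ((∏ i ∈ Finset.range s, ((y-1) - (i:ℝ))) * y) * (((N-1) - s).factorial : ℝ))
          = (-y) * ∑ s ∈ Finset.range (t+1), (-1 : ℝ)^s * (t.choose s : ℝ)
            * (∏ i ∈ Finset.range s, ((y-1) - (i:ℝ))) * (((N-1) - s).factorial : ℝ) := by
            rw [Finset.mul_sum]
            exact Finset.sum_congr rfl fun s _ => by ring
        _ = (-y) * ((((N-1) - t).factorial : ℝ)
              * ∏ i ∈ Finset.range t, (((N-1:ℕ):ℝ) - (y-1) - (i:ℝ))) := by rw [this]
        _ = -y * (((N-1) - t).factorial : ℝ)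
              * ∏ i ∈ Finset.range t, ((N:ℝ) - y - (i:ℝ)) := by
            have hc : ((N-1:ℕ):ℝ) = (N:ℝ) - 1 := by
              push_cast [Nat.cast_sub hN1]
              ring
            rw [hc]
            have : ∀ i ∈ Finset.range t, ((N:ℝ) - 1 - (y-1) - (i:ℝ)) = ((N:ℝ) - y - (i:ℝ)) :=
              fun i _ => by ring
            rw [Finset.prod_congr rfl this]
            ring
    rw [add_right_comm, hA, hB]
    -- combine
    have hfac : ((N - t).factorial : ℝ)
        = ((N - t : ℕ) : ℝ) * ((N - (t+1)).factorial : ℝ) := by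
      have h1 : N - t = (N - (t+1)) + 1 := by omega
      rw [h1, Nat.factorial_succ]
      push_cast
      ring
    have hidx2 : (N-1) - t = N - (t+1) := by omega
    have hcastNt : ((N - t : ℕ) : ℝ) = (N:ℝ) - (t:ℝ) := by
      push_cast [Nat.cast_sub (by omega : t ≤ N)]
      ring
    rw [hfac, hidx2, hcastNt, Finset.prod_range_succ]
    ring

lemma phi_eval (n t : ℕ) (ht2 : 2*t ≤ n) (K : ℝ) :
    ∑ j ∈ Finset.range (t+1), (-1:ℝ)^(t-j) * (t.choose j : ℝ)
        * (((n - (2*t - j)).factorial : ℝ) * ∏ i ∈ Finset.range (2*t - j), (K - (i:ℝ)))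
    = ((n - 2*t).factorial : ℝ)
        * ∏ i ∈ Finset.range t, ((K - (i:ℝ)) * ((n:ℝ) - K - (i:ℝ))) := by
  rw [← Finset.sum_range_reflect]
  have hstep : ∀ r ∈ Finset.range (t+1),
      (-1:ℝ)^(t-(t+1-1-r)) * (t.choose (t+1-1-r) : ℝ)
        * (((n - (2*t - (t+1-1-r))).factorial : ℝ)
          * ∏ i ∈ Finset.range (2*t - (t+1-1-r)), (K - (i:ℝ)))
      = (∏ i ∈ Finset.range t, (K - (i:ℝ)))
        * ((-1:ℝ)^r * (t.choose r : ℝ) * (∏ i ∈ Finset.range r, ((K - (t:ℝ)) - (i:ℝ)))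
            * (((n - t) - r).factorial : ℝ)) := by
    intro r hr
    rw [Finset.mem_range] at hr
    have h1 : t + 1 - 1 - r = t - r := by omega
    have h2 : t - (t - r) = r := by omega
    have h3 : 2*t - (t - r) = t + r := by omega
    have h4 : n - (t + r) = (n - t) - r := by omega
    rw [h1, h2, h3, h4, Nat.choose_symm (by omega : r ≤ t)]
    rw [Finset.prod_range_add]
    have h6 : ∀ i ∈ Finset.range r, (K - ((t + i : ℕ) : ℝ)) = ((K - (t:ℝ)) - (i:ℝ)) := by
      intro i _
      push_cast
      ring
    rw [Finset.prod_congr rfl h6]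
    ring
  rw [Finset.sum_congr rfl hstep, ← Finset.mul_sum]
  rw [core_identity t (n - t) (by omega) (K - (t:ℝ))]
  have h7 : (n - t) - t = n - 2*t := by omega
  have h8 : ∀ i ∈ Finset.range t, (((n - t : ℕ) : ℝ) - (K - (t:ℝ)) - (i:ℝ))
      = ((n:ℝ) - K - (i:ℝ)) := by
    intro i _
    rw [Nat.cast_sub (by omega : t ≤ n)]
    ring
  rw [h7, Finset.prod_congr rfl h8, ← mul_assoc, mul_comm (∏ i ∈ Finset.range t, (K - (i:ℝ)))
    (((n - 2*t).factorial : ℝ)), mul_assoc, ← Finset.prod_mul_distrib]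


end Aux

open Finset in
/-- For `p, q ∈ Ker(W_t)` with `t ≤ n/2`, the symmetrization of `pq` on the
hypercube equals `⟨p,q⟩·((n-2t)!/n!)·Π_{i=0}^{t-1}(|x|-i)(n-|x|-i)`. -/
theorem sym_product_kernel (n t : ℕ) (ht1 : 1 ≤ t) (ht2 : 2 * t ≤ n)
    (p q : MvPolynomial (Fin n) ℝ)
    (hp : p ∈ homogML n t) (hq : q ∈ homogML n t)
    (hpk : Wop n p = 0) (hqk : Wop n q = 0) :
    ∀ x : Fin n → ℝ, (∀ i, x i = 0 ∨ x i = 1) →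
      (1 / (n.factorial : ℝ)) *
          ∑ σ : Equiv.Perm (Fin n), eval (x ∘ σ) p * eval (x ∘ σ) q
        = (∑ S ∈ Finset.powersetCard t (Finset.univ : Finset (Fin n)),
              coeff (∑ i ∈ S, Finsupp.single i 1) p *
                coeff (∑ i ∈ S, Finsupp.single i 1) q)
          * (((n - 2 * t).factorial : ℝ) / (n.factorial : ℝ))
          * ∏ i ∈ Finset.range t,
              ((∑ l, x l) - (i : ℝ)) * ((n : ℝ) - (∑ l, x l) - (i : ℝ)) := by
  classical
  intro x hx
  have hfne : (n.factorial : ℝ) ≠ 0 := by positivity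
  set K : ℝ := ∑ l, x l with hK
  set G : ℕ → ℝ := fun j =>
    ((n - (2*t - j)).factorial : ℝ) * ∏ i ∈ Finset.range (2*t - j), (K - (i:ℝ)) with hG
  have hidem : ∀ σ : Equiv.Perm (Fin n), ∀ i, x (σ i) * x (σ i) = x (σ i) := by
    intro σ i
    rcases hx (σ i) with h | h <;> rw [h] <;> ring
  -- step 1: expand the sum over permutations
  have hsum : ∑ σ : Equiv.Perm (Fin n), eval (x ∘ σ) p * eval (x ∘ σ) q
      = ∑ S ∈ Finset.powersetCard t (Finset.univ : Finset (Fin n)),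
          ∑ T ∈ Finset.powersetCard t (Finset.univ : Finset (Fin n)),
            coeff (indF S) p * coeff (indF T) q * G ((S ∩ T).card) := by
    have heval : ∀ σ : Equiv.Perm (Fin n),
        eval (x ∘ σ) p * eval (x ∘ σ) q
        = ∑ S ∈ Finset.powersetCard t (Finset.univ : Finset (Fin n)),
            ∑ T ∈ Finset.powersetCard t (Finset.univ : Finset (Fin n)),
              coeff (indF S) p * coeff (indF T) q
                * ((∏ i ∈ S, x (σ i)) * (∏ i ∈ T, x (σ i))) := by
      intro σ
      rw [eval_homogML hp (x ∘ σ), eval_homogML hq (x ∘ σ), Finset.sum_mul_sum]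
      refine Finset.sum_congr rfl fun S _ => Finset.sum_congr rfl fun T _ => ?_
      simp only [Function.comp_apply]
      ring
    rw [Finset.sum_congr rfl fun σ _ => heval σ]
    rw [Finset.sum_comm]
    refine Finset.sum_congr rfl fun S hS => ?_
    rw [Finset.sum_comm]
    refine Finset.sum_congr rfl fun T hT => ?_
    rw [← Finset.mul_sum]
    congr 1
    have hunion : ∀ σ : Equiv.Perm (Fin n),
        (∏ i ∈ S, x (σ i)) * (∏ i ∈ T, x (σ i)) = ∏ i ∈ S ∪ T, x (σ i) :=
      fun σ => prod_union_idem (hidem σ) S T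
    rw [Finset.sum_congr rfl fun σ _ => hunion σ]
    rw [g_formula x hx ((S ∪ T).card) (S ∪ T) rfl]
    rw [Finset.mem_powersetCard] at hS hT
    have hcu := Finset.card_union_add_card_inter S T
    have hle : (S ∩ T).card ≤ t := by
      have := Finset.card_le_card (Finset.inter_subset_left (s₁ := S) (s₂ := T))
      omega
    have hcard : (S ∪ T).card = 2*t - (S ∩ T).card := by omega
    rw [hcard, hG]
  -- step 2: apply the kernel identity for p, for each fixed T
  have kcp := kernel_cond ht1 hp hpk
  set Φ : ℝ := ∑ j ∈ Finset.range (t+1), (-1:ℝ)^(t-j) * (t.choose j : ℝ) * G j with hΦ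
  have hsum2 : ∑ σ : Equiv.Perm (Fin n), eval (x ∘ σ) p * eval (x ∘ σ) q
      = (∑ S ∈ Finset.powersetCard t (Finset.univ : Finset (Fin n)),
          coeff (indF S) p * coeff (indF S) q) * Φ := by
    rw [hsum, Finset.sum_comm, Finset.sum_mul]
    refine Finset.sum_congr rfl fun T hT => ?_
    rw [Finset.mem_powersetCard] at hT
    have hkey := key_kernel_identity t ht1 (fun S => coeff (indF S) p) kcp T hT.2
      (fun j => coeff (indF T) q * G j)
    calc ∑ S ∈ Finset.powersetCard t (Finset.univ : Finset (Fin n)),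
          coeff (indF S) p * coeff (indF T) q * G ((S ∩ T).card)
        = ∑ S ∈ Finset.powersetCard t (Finset.univ : Finset (Fin n)),
            coeff (indF S) p * (coeff (indF T) q * G ((S ∩ T).card)) := by
          exact Finset.sum_congr rfl fun S _ => by ring
      _ = coeff (indF T) p * ∑ j ∈ Finset.range (t+1),
            (-1:ℝ)^(t-j) * (t.choose j : ℝ) * (coeff (indF T) q * G j) := hkey
      _ = coeff (indF T) p * coeff (indF T) q * Φ := by
          rw [hΦ, Finset.mul_sum, Finset.mul_sum]
          exact Finset.sum_congr rfl fun j _ => by ring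
  -- step 3: evaluate Φ
  have hphi : Φ = ((n - 2*t).factorial : ℝ)
      * ∏ i ∈ Finset.range t, ((K - (i:ℝ)) * ((n:ℝ) - K - (i:ℝ))) := by
    rw [hΦ]
    simp only [hG]
    exact phi_eval n t ht2 K
  have hind : ∀ S : Finset (Fin n),
      (∑ i ∈ S, Finsupp.single i 1 : Fin n →₀ ℕ) = indF S := fun S => rfl
  simp only [hind]
  rw [hsum2, hphi]
  ring
end
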